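/- arXiv:2506.10611 — 4 statements merged into one kernel-verified Lean document; each statement's English description precedes it below -/
import Mathlib

section
/- Let $0 \le \gamma < 1$, $p > 1$, $a > 0$, $b > 0$. Then there exists a constant $K = K(a,b,p,\gamma) > 0$ such that: if $T \ge 1$ and $w \in C^1([0,T])$ is positive and satisfies $w'(t) + a\,w(t) \ge b \int_0^t (t-s)^{-\gamma} w(s)^p\,ds$ for all $t \in [0,T]$, then $w(0) < K$. -/
open MeasureTheory intervalIntegral

lemma seq_div_aux (p α β : ℝ) (hp : 1 < p) (hα : 0 ≤ α) (B : ℕ → ℝ)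
    (hB0 : 1 + (α + |β| + α / (p - 1) + 1) / (p - 1) ≤ B 0)
    (hBs : ∀ n : ℕ, B (n + 1) = p * B n - α * n - β) :
    ∀ n : ℕ, (p : ℝ) ^ n ≤ B n := by
  have hp1 : (0:ℝ) < p - 1 := by linarith
  set c1 := α / (p - 1) with hc1def
  set c2 := (α + |β| + c1 + 1) / (p - 1) with hc2def
  have hc1 : 0 ≤ c1 := div_nonneg hα hp1.le
  have habs : 0 ≤ |β| := abs_nonneg β
  have hc2 : 0 ≤ c2 := div_nonneg (by linarith) hp1.le
  have h1 : (p - 1) * c1 = α := by rw [hc1def]; field_simp [hp1.ne']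
  have h2 : (p - 1) * c2 = α + |β| + c1 + 1 := by rw [hc2def]; field_simp [hp1.ne']
  have key : ∀ n : ℕ, (p:ℝ) ^ n + c1 * n + c2 ≤ B n := by
    intro n
    induction n with
    | zero => simpa using hB0
    | succ n ih =>
      rw [hBs]
      have hβ : β ≤ |β| := le_abs_self β
      have hpow : (1:ℝ) ≤ p ^ n := one_le_pow₀ hp.le
      have hmul := mul_le_mul_of_nonneg_left ih (by linarith : (0:ℝ) ≤ p)
      have hn : (0:ℝ) ≤ (n:ℝ) := Nat.cast_nonneg n
      push_cast [pow_succ]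
      nlinarith [mul_nonneg hc1 hn]
  intro n
  have := key n
  nlinarith [mul_nonneg hc1 (Nat.cast_nonneg n : (0:ℝ) ≤ (n:ℝ))]

theorem ode_lemma_i (γ p a b : ℝ) (hγ0 : 0 ≤ γ) (hγ1 : γ < 1) (hp : 1 < p)
    (ha : 0 < a) (hb : 0 < b) :
    ∃ K : ℝ, 0 < K ∧ ∀ (T : ℝ) (w : ℝ → ℝ), 1 ≤ T →
      ContDiffOn ℝ 1 w (Set.Icc 0 T) →
      (∀ t ∈ Set.Icc (0 : ℝ) T, 0 < w t) →
      (∀ t ∈ Set.Icc (0 : ℝ) T,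
        deriv w t + a * w t ≥ b * ∫ s in (0 : ℝ)..t, (t - s) ^ (-γ) * w s ^ p) →
      w 0 < K := by
  have hp0 : (0:ℝ) < p := by linarith
  set c := b * Real.exp (-(a * p)) with hcdef
  have hc : 0 < c := by positivity
  set α := Real.log 4 with hαdef
  set β := Real.log (8 / c) with hβdef
  have hα : 0 ≤ α := Real.log_nonneg (by norm_num)
  clear_value c α β
  set B : ℕ → ℝ := fun n => Nat.rec (1 + (α + |β| + α / (p - 1) + 1) / (p - 1))
      (fun n Bn => p * Bn - α * n - β) n with hBdef
  have hB0 : B 0 = 1 + (α + |β| + α / (p - 1) + 1) / (p - 1) := rfl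
  have hBs : ∀ n : ℕ, B (n + 1) = p * B n - α * n - β := fun n => rfl
  clear_value B
  have hBn := seq_div_aux p α β hp hα B (le_of_eq hB0.symm) hBs
  refine ⟨Real.exp (B 0), Real.exp_pos _, ?_⟩
  intro T w hT hw hwpos hineq
  by_contra hKlt
  push_neg at hKlt
  set u : ℝ → ℝ := fun t => Real.exp (a * t) * w t with hudef
  clear_value u
  have hwc : ContinuousOn w (Set.Icc 0 T) := hw.continuousOn
  have hsub1T : Set.Icc (0:ℝ) 1 ⊆ Set.Icc 0 T := Set.Icc_subset_Icc_right hT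
  -- differentiability inside (0,1)
  have hdiff : ∀ t ∈ Set.Ioo (0:ℝ) 1, DifferentiableAt ℝ w t := by
    intro t ht
    have hmem : Set.Icc (0:ℝ) T ∈ nhds t :=
      Icc_mem_nhds ht.1 (lt_of_lt_of_le ht.2 hT)
    exact ((hw.differentiableOn one_ne_zero) t ⟨ht.1.le, le_trans ht.2.le hT⟩).differentiableAt hmem
  have hu_der : ∀ t ∈ Set.Ioo (0:ℝ) 1,
      HasDerivAt u (Real.exp (a * t) * (deriv w t + a * w t)) t := by
    intro t ht
    have h1 : HasDerivAt (fun x : ℝ => a * x) a t := by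
      simpa using (hasDerivAt_id t).const_mul a
    have h2 : HasDerivAt (fun x : ℝ => Real.exp (a * x)) (Real.exp (a * t) * a) t := h1.exp
    have h3 := h2.mul ((hdiff t ht).hasDerivAt)
    rw [hudef]
    exact h3.congr_deriv (by ring)
  -- nonnegativity of the memory integral
  have hInn : ∀ t ∈ Set.Icc (0:ℝ) 1,
      0 ≤ ∫ s in (0:ℝ)..t, (t - s) ^ (-γ) * w s ^ p := by
    intro t ht
    refine intervalIntegral.integral_nonneg ht.1 ?_
    intro s hs
    have h1 : 0 ≤ (t - s) ^ (-γ) := Real.rpow_nonneg (by linarith [hs.2]) _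
    have h2 : 0 ≤ w s ^ p :=
      Real.rpow_nonneg (hwpos s ⟨hs.1, le_trans (le_trans hs.2 ht.2) hT⟩).le _
    exact mul_nonneg h1 h2
  -- u is monotone on [0,1]
  have hu_cont : ContinuousOn u (Set.Icc 0 1) := by
    rw [hudef]
    exact ((Real.continuous_exp.comp (continuous_const.mul continuous_id)).continuousOn).mul
      (hwc.mono hsub1T)
  have hu_mono : MonotoneOn u (Set.Icc (0:ℝ) 1) := by
    apply monotoneOn_of_deriv_nonneg (convex_Icc 0 1) hu_cont
    · intro t ht
      rw [interior_Icc] at ht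
      exact ((hu_der t ht).differentiableAt).differentiableWithinAt
    · intro t ht
      rw [interior_Icc] at ht
      rw [(hu_der t ht).deriv]
      have h1 := hineq t ⟨ht.1.le, le_trans ht.2.le hT⟩
      have h2 := hInn t ⟨ht.1.le, ht.2.le⟩
      have h3 : 0 ≤ deriv w t + a * w t := le_trans (mul_nonneg hb.le h2) h1
      positivity
  -- main induction
  have hmain : ∀ n : ℕ, Real.exp (B n) ≤ u (1 - (1/2:ℝ)^n) := by
    intro n
    induction n with
    | zero => simpa [hudef] using hKlt
    | succ n ih =>
      set r : ℝ := 1 - (1/2:ℝ)^n with hrdef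
      set r' : ℝ := 1 - (1/2:ℝ)^(n+1) with hr'def
      clear_value r r'
      set A : ℝ := Real.exp (B n) with hAdef
      clear_value A
      have hApos : 0 < A := hAdef ▸ Real.exp_pos _
      have hpow1 : (1/2:ℝ)^n ≤ 1 := pow_le_one₀ (by norm_num) (by norm_num)
      have hpowpos : (0:ℝ) < (1/2:ℝ)^n := by positivity
      have hr0 : 0 ≤ r := by simp only [hrdef]; linarith
      have hrr' : r < r' := by
        simp only [hrdef, hr'def, pow_succ]; nlinarith
      have hr'1 : r' < 1 := by
        simp only [hr'def]; nlinarith [pow_pos (by norm_num : (0:ℝ) < 1/2) (n+1)]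
      -- key derivative estimate
      have hkey : ∀ t ∈ Set.Ioo r 1,
          c * A ^ p * (t - r) ≤ deriv u t := by
        intro t ht
        have ht01 : t ∈ Set.Ioo (0:ℝ) 1 := ⟨lt_of_le_of_lt hr0 ht.1, ht.2⟩
        have htT : t ∈ Set.Icc (0:ℝ) T := ⟨ht01.1.le, le_trans ht01.2.le hT⟩
        -- integrability of the kernel
        have hker : IntervalIntegrable (fun s => (t - s) ^ (-γ) * w s ^ p) volume 0 t := by
          have h1 : IntervalIntegrable (fun s => (t - s) ^ (-γ)) volume 0 t := by
            have := (intervalIntegral.intervalIntegrable_rpow'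
              (by linarith : (-1:ℝ) < -γ) (a := 0) (b := t)).comp_sub_left t
            simpa using this.symm
          have h2 : ContinuousOn (fun s => w s ^ p) (Set.uIcc 0 t) := by
            have hsub : Set.uIcc (0:ℝ) t ⊆ Set.Icc 0 T := by
              rw [Set.uIcc_of_le ht01.1.le]
              exact fun x hx => ⟨hx.1, le_trans (le_trans hx.2 ht01.2.le) hT⟩
            exact (hwc.mono hsub).rpow_const (fun x hx => Or.inr hp0.le)
          exact h1.mul_continuousOn h2
        have hi1 : IntervalIntegrable (fun s => (t - s) ^ (-γ) * w s ^ p) volume 0 r :=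
          hker.mono_set (by
            rw [Set.uIcc_of_le hr0, Set.uIcc_of_le ht01.1.le]
            exact Set.Icc_subset_Icc_right ht.1.le)
        have hi2 : IntervalIntegrable (fun s => (t - s) ^ (-γ) * w s ^ p) volume r t :=
          hker.mono_set (by
            rw [Set.uIcc_of_le ht.1.le, Set.uIcc_of_le ht01.1.le]
            exact Set.Icc_subset_Icc_left hr0)
        have hsplit : (∫ s in (0:ℝ)..t, (t - s) ^ (-γ) * w s ^ p)
            = (∫ s in (0:ℝ)..r, (t - s) ^ (-γ) * w s ^ p)
              + ∫ s in r..t, (t - s) ^ (-γ) * w s ^ p :=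
          (intervalIntegral.integral_add_adjacent_intervals hi1 hi2).symm
        have hpiece1 : 0 ≤ ∫ s in (0:ℝ)..r, (t - s) ^ (-γ) * w s ^ p := by
          refine intervalIntegral.integral_nonneg hr0 ?_
          intro s hs
          have h1 : 0 ≤ (t - s) ^ (-γ) :=
            Real.rpow_nonneg (by linarith [hs.2, ht.1]) _
          have h2 : 0 ≤ w s ^ p :=
            Real.rpow_nonneg (hwpos s ⟨hs.1, by linarith [hs.2, ht01.2, hT]⟩).le _
          exact mul_nonneg h1 h2
        set m : ℝ := (Real.exp (-a) * A) ^ p with hmdef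
        clear_value m
        have hmpos : 0 < m := hmdef ▸ Real.rpow_pos_of_pos (by positivity) _
        have hpiece2 : (t - r) * m ≤ ∫ s in r..t, (t - s) ^ (-γ) * w s ^ p := by
          have hconst : (∫ _ in r..t, m) = (t - r) * m := by
            simp [smul_eq_mul]
          rw [← hconst]
          refine intervalIntegral.integral_mono_ae_restrict ht.1.le
            intervalIntegrable_const hi2 ?_
          have hne : ∀ᵐ s : ℝ, s ≠ t := by
            rw [MeasureTheory.ae_iff]
            convert Real.volume_singleton (a := t) using 2
            ext x
            simp
          filter_upwards [MeasureTheory.ae_restrict_mem measurableSet_Icc,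
            MeasureTheory.ae_restrict_of_ae hne] with s hs hsne
          have hst : s < t := lt_of_le_of_ne hs.2 hsne
          have hs01 : s ∈ Set.Icc (0:ℝ) 1 := ⟨le_trans hr0 hs.1, by linarith [ht01.2]⟩
          have hus : A ≤ u s := le_trans ih (hu_mono ⟨hr0, by linarith [ht.2]⟩ hs01 hs.1)
          have hwspos : 0 < w s := hwpos s ⟨hs01.1, le_trans hs01.2 hT⟩
          have hws : Real.exp (-a) * A ≤ w s := by
            have hw_eq : Real.exp (-(a*s)) * u s = w s := by
              simp only [hudef, ← mul_assoc, ← Real.exp_add]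
              simp
            have h1 : Real.exp (-a) ≤ Real.exp (-(a*s)) :=
              Real.exp_le_exp.mpr (by nlinarith [hs01.1, hs01.2])
            calc Real.exp (-a) * A ≤ Real.exp (-(a*s)) * A :=
                  mul_le_mul_of_nonneg_right h1 hApos.le
              _ ≤ Real.exp (-(a*s)) * u s :=
                  mul_le_mul_of_nonneg_left hus (Real.exp_pos _).le
              _ = w s := hw_eq
          have hwsp : m ≤ w s ^ p := by
            rw [hmdef]
            exact Real.rpow_le_rpow (by positivity) hws hp0.le
          have hk1 : (1:ℝ) ≤ (t - s) ^ (-γ) :=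
            Real.one_le_rpow_of_pos_of_le_one_of_nonpos (by linarith)
              (by linarith [hs.1, hr0, ht01.2]) (by linarith)
          calc m ≤ w s ^ p := hwsp
            _ = 1 * w s ^ p := (one_mul _).symm
            _ ≤ (t - s) ^ (-γ) * w s ^ p :=
                mul_le_mul_of_nonneg_right hk1 (Real.rpow_nonneg hwspos.le _)
        -- conclude the derivative bound
        have hIt := hineq t htT
        have hderiv_u : deriv u t = Real.exp (a*t) * (deriv w t + a * w t) :=
          (hu_der t ht01).deriv
        rw [hderiv_u]
        have hexp1 : (1:ℝ) ≤ Real.exp (a * t) :=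
          Real.one_le_exp (mul_nonneg ha.le ht01.1.le)
        have hI : (t - r) * m ≤ ∫ s in (0:ℝ)..t, (t - s) ^ (-γ) * w s ^ p := by
          rw [hsplit]; linarith
        have hm_eq : b * m = c * A ^ p := by
          rw [hmdef, Real.mul_rpow (Real.exp_pos _).le hApos.le, hcdef]
          have he : Real.exp (-a) ^ p = Real.exp (-(a*p)) := by
            rw [Real.rpow_def_of_pos (Real.exp_pos _), Real.log_exp]
            ring_nf
          rw [he]; ring
        have hInn_t := hInn t ⟨ht01.1.le, ht01.2.le⟩
        have hX : 0 ≤ deriv w t + a * w t :=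
          le_trans (mul_nonneg hb.le hInn_t) hIt
        have hbI : b * ((t - r) * m) ≤ b * ∫ s in (0:ℝ)..t, (t - s) ^ (-γ) * w s ^ p :=
          mul_le_mul_of_nonneg_left hI hb.le
        calc c * A ^ p * (t - r) = b * ((t - r) * m) := by rw [← hm_eq]; ring
          _ ≤ b * ∫ s in (0:ℝ)..t, (t - s) ^ (-γ) * w s ^ p := hbI
          _ ≤ deriv w t + a * w t := hIt
          _ = 1 * (deriv w t + a * w t) := (one_mul _).symm
          _ ≤ Real.exp (a*t) * (deriv w t + a * w t) :=
              mul_le_mul_of_nonneg_right hexp1 hX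
      -- monotonicity of the comparison function φ
      set Q : ℝ := c * A ^ p with hQdef
      clear_value Q
      have hApow : 0 < A ^ p := Real.rpow_pos_of_pos hApos _
      have hQpos : 0 < Q := hQdef ▸ mul_pos hc hApow
      set φ : ℝ → ℝ := fun t => u t - Q / 2 * (t - r) ^ 2 with hφdef
      clear_value φ
      have hφmono : MonotoneOn φ (Set.Icc r 1) := by
        apply monotoneOn_of_deriv_nonneg (convex_Icc r 1)
        · rw [hφdef]
          exact (hu_cont.mono (Set.Icc_subset_Icc_left hr0)).sub
            (continuous_const.mul ((continuous_id.sub continuous_const).pow 2)).continuousOn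
        · intro t ht
          rw [interior_Icc] at ht
          have hu' := hu_der t ⟨lt_of_le_of_lt hr0 ht.1, ht.2⟩
          have hq : HasDerivAt (fun x : ℝ => Q / 2 * (x - r)^2) (Q/2 * (2 * (t - r))) t := by
            have h := (((hasDerivAt_id t).sub_const r).pow 2).const_mul (Q/2)
            simpa using h
          rw [hφdef]
          exact (hu'.sub hq).differentiableAt.differentiableWithinAt
        · intro t ht
          rw [interior_Icc] at ht
          have hu' := hu_der t ⟨lt_of_le_of_lt hr0 ht.1, ht.2⟩
          have hq : HasDerivAt (fun x : ℝ => Q / 2 * (x - r)^2) (Q/2 * (2 * (t - r))) t := by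
            have h := (((hasDerivAt_id t).sub_const r).pow 2).const_mul (Q/2)
            simpa using h
          have hφ' := hu'.sub hq
          rw [hφdef, show (fun t => u t - Q / 2 * (t - r) ^ 2) = (u - fun x => Q / 2 * (x - r) ^ 2) from rfl, hφ'.deriv]
          have h2 := hkey t ht
          have h3 := hu'.deriv
          rw [← h3]
          have h4 : Q / 2 * (2 * (t - r)) = Q * (t - r) := by ring
          rw [h4]
          linarith [h2]
      have hr'mem : r' ∈ Set.Icc r 1 := ⟨hrr'.le, hr'1.le⟩
      have hrmem : r ∈ Set.Icc r 1 := ⟨le_rfl, by linarith⟩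
      have hφle : φ r ≤ φ r' := hφmono hrmem hr'mem hrr'.le
      have hφr : φ r = u r := by simp [hφdef]
      have hφr' : φ r' = u r' - Q / 2 * (r' - r) ^ 2 := by rw [hφdef]
      have hΔ : r' - r = (1/2:ℝ)^(n+1) := by
        simp only [hrdef, hr'def, pow_succ]; ring
      have h9 : ((1/2:ℝ)^(n+1))^2 = 1/4 * (1/4:ℝ)^n := by
        rw [show (1/2:ℝ) = (1/2) by rfl]
        have : ((1/2:ℝ)^(n+1))^2 = ((1/4:ℝ))^(n+1) := by
          rw [show (1/4:ℝ) = (1/2)*(1/2) by norm_num, mul_pow, sq]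
        rw [this, pow_succ]; ring
      have hQval : Q / 2 * (r' - r) ^ 2 = c / 8 * (1/4:ℝ)^n * A ^ p := by
        rw [hΔ, h9, hQdef]; ring
      have hexpB : Real.exp (B (n+1)) = c / 8 * (1/4:ℝ)^n * A ^ p := by
        rw [hBs n, show p * B n - α * (n:ℝ) - β = (B n * p) + ((n:ℝ) * (-α)) + (-β) by ring,
          Real.exp_add, Real.exp_add]
        have e1 : Real.exp (B n * p) = A ^ p := by
          rw [hAdef, Real.rpow_def_of_pos (Real.exp_pos _), Real.log_exp]
        have e2 : Real.exp ((n:ℝ) * (-α)) = (1/4:ℝ)^n := by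
          rw [Real.exp_nat_mul]
          congr 1
          rw [hαdef, Real.exp_neg, Real.exp_log (by norm_num : (0:ℝ) < 4)]
          norm_num
        have e3 : Real.exp (-β) = c / 8 := by
          rw [hβdef, Real.exp_neg, Real.exp_log (by positivity), inv_div]
        rw [e1, e2, e3]; ring
      rw [hexpB]
      have hfin : u r + c / 8 * (1/4:ℝ)^n * A ^ p ≤ u r' := by
        have := hφle
        rw [hφr, hφr', hQval] at this
        linarith
      linarith [ih, hApos.le]
  -- final contradiction
  obtain ⟨n, hn⟩ := pow_unbounded_of_one_lt (u 1) hp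
  have h1 := hmain n
  have hpow1 : (1/2:ℝ)^n ≤ 1 := pow_le_one₀ (by norm_num) (by norm_num)
  have hpowpos : (0:ℝ) < (1/2:ℝ)^n := by positivity
  have h2 : u (1 - (1/2:ℝ)^n) ≤ u 1 :=
    hu_mono ⟨by linarith, by linarith⟩ ⟨by norm_num, le_rfl⟩ (by linarith)
  have h3 := hBn n
  have h4 := Real.add_one_le_exp ((p:ℝ)^n)
  have h5 := Real.exp_le_exp.mpr h3
  linarith
end

section
/- Let $0 < \gamma < 1$, $p > 1$ with $p\gamma \le 1$, and $a, b > 0$. Then there is no positive function $w \in C^1([0,\infty))$ satisfying $w'(t) + a\,w(t) \ge b \int_0^t (t-s)^{-\gamma} w(s)^p\,ds$ for all $t > 0$. In other words, any positive $C^1$ solution of this integral-differential inequality exists only on a bounded time interval. -/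
open MeasureTheory intervalIntegral

lemma helper_mono {f f' : ℝ → ℝ} {A B K : ℝ} (hAB : A ≤ B)
    (hc : ContinuousOn f (Set.Icc A B))
    (hder : ∀ x ∈ Set.Ioo A B, HasDerivAt f (f' x) x)
    (hK : ∀ x ∈ Set.Ioo A B, K ≤ f' x) :
    f A + K * (B - A) ≤ f B := by
  have hD : ∀ x ∈ Set.Ioo A B, HasDerivAt (fun y => f y - K * y) (f' x - K) x := by
    intro x hx
    have hg : HasDerivAt (fun y : ℝ => K * y) K x := by
      simpa using (hasDerivAt_id x).const_mul K
    exact (hder x hx).sub hg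
  have hmono : MonotoneOn (fun x => f x - K * x) (Set.Icc A B) := by
    apply monotoneOn_of_deriv_nonneg (convex_Icc A B)
    · exact hc.sub ((continuous_const.mul continuous_id).continuousOn)
    · intro x hx
      rw [interior_Icc] at hx
      exact (hD x hx).differentiableAt.differentiableWithinAt
    · intro x hx
      rw [interior_Icc] at hx
      rw [(hD x hx).deriv]
      have := hK x hx
      linarith
  have h2 := hmono (Set.left_mem_Icc.2 hAB) (Set.right_mem_Icc.2 hAB) hAB
  simp only at h2
  linarith

lemma helper_growth {p : ℝ} (hp : 1 < p) (A B : ℝ) : ∃ n : ℕ, A + B * n ≤ p ^ n := by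
  have hp0 : 0 < p := lt_trans one_pos hp
  have hr : ‖p⁻¹‖ < 1 := by
    rw [Real.norm_eq_abs, abs_of_pos (inv_pos.2 hp0)]
    exact inv_lt_one_of_one_lt₀ hp
  have h1 : Summable (fun n : ℕ => (n : ℝ) ^ 1 * p⁻¹ ^ n) :=
    summable_pow_mul_geometric_of_norm_lt_one 1 hr
  have h2 := h1.tendsto_atTop_zero
  have h3 : Filter.Tendsto (fun n : ℕ => p⁻¹ ^ n) Filter.atTop (nhds 0) :=
    tendsto_pow_atTop_nhds_zero_of_norm_lt_one hr
  have h4 : Filter.Tendsto (fun n : ℕ => A * p⁻¹ ^ n + B * ((n : ℝ) ^ 1 * p⁻¹ ^ n))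
      Filter.atTop (nhds (A * 0 + B * 0)) := (h3.const_mul A).add (h2.const_mul B)
  rw [mul_zero, mul_zero, add_zero] at h4
  obtain ⟨n, hn⟩ := (h4.eventually (gt_mem_nhds one_pos)).exists
  refine ⟨n, ?_⟩
  have hpow : (0:ℝ) < p ^ n := pow_pos hp0 n
  have hid : p⁻¹ ^ n * p ^ n = 1 := by
    rw [← mul_pow, inv_mul_cancel₀ (ne_of_gt hp0), one_pow]
  have key : (A + B * n) * p⁻¹ ^ n < 1 := by
    have he : A * p⁻¹ ^ n + B * ((n : ℝ) ^ 1 * p⁻¹ ^ n) = (A + B * n) * p⁻¹ ^ n := by ring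
    rw [he] at hn
    exact hn
  calc A + B * n = ((A + B * n) * p⁻¹ ^ n) * p ^ n := by
        rw [mul_assoc, hid, mul_one]
    _ ≤ 1 * p ^ n := mul_le_mul_of_nonneg_right key.le hpow.le
    _ = p ^ n := one_mul _

set_option maxHeartbeats 2000000 in
theorem ode_lemma_ii (γ p a b : ℝ) (hγ0 : 0 < γ) (hγ1 : γ < 1) (hp : 1 < p)
    (hpγ : p * γ ≤ 1) (ha : 0 < a) (hb : 0 < b) :
    ¬ ∃ w : ℝ → ℝ,
      ContDiffOn ℝ 1 w (Set.Ici 0) ∧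
      (∀ t ∈ Set.Ici (0 : ℝ), 0 < w t) ∧
      (∀ t > (0 : ℝ),
        deriv w t + a * w t ≥ b * ∫ s in (0 : ℝ)..t, (t - s) ^ (-γ) * w s ^ p) := by
  rintro ⟨w, hw, hpos, hineq⟩
  have hp0 : 0 < p := lt_trans one_pos hp
  have hwc : ContinuousOn w (Set.Ici 0) := hw.continuousOn
  -- derivative exists at every positive point
  have hd : ∀ t : ℝ, 0 < t → HasDerivAt w (deriv w t) t := by
    intro t ht
    exact ((hw.contDiffAt (Ici_mem_nhds ht)).differentiableAt one_ne_zero).hasDerivAt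
  -- continuity of w^p
  have hwp : ContinuousOn (fun s => w s ^ p) (Set.Ici 0) :=
    hwc.rpow_const (fun s hs => Or.inl (ne_of_gt (hpos s hs)))
  -- minimum of w on [0,1]
  obtain ⟨s₀, hs₀mem, hs₀min⟩ := isCompact_Icc.exists_isMinOn
    (⟨0, by norm_num⟩ : (Set.Icc (0:ℝ) 1).Nonempty)
    (hwc.mono (fun x hx => hx.1))
  set m := w s₀ with hmdef
  have hm0 : 0 < m := hpos s₀ hs₀mem.1
  have hm : ∀ s ∈ Set.Icc (0:ℝ) 1, m ≤ w s := fun s hs => isMinOn_iff.1 hs₀min s hs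
  -- nonnegativity of the memory integrand
  have hnn : ∀ σ s : ℝ, s ≤ σ → 0 ≤ s → 0 ≤ (σ - s) ^ (-γ) * w s ^ p := by
    intro σ s h1 h2
    exact mul_nonneg (Real.rpow_nonneg (by linarith) _)
      (Real.rpow_nonneg (le_of_lt (hpos s h2)) _)
  -- integrability of the memory integrand
  have hKint_int : ∀ σ : ℝ, 0 < σ →
      IntervalIntegrable (fun s => (σ - s) ^ (-γ) * w s ^ p) volume 0 σ := by
    intro σ hσ
    have h1 : IntervalIntegrable (fun s : ℝ => s ^ (-γ)) volume 0 σ :=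
      intervalIntegral.intervalIntegrable_rpow' (by linarith)
    have h2 := h1.comp_sub_left σ
    simp only [sub_zero, sub_self] at h2
    have hsub : Set.uIcc (0:ℝ) σ ⊆ Set.Ici 0 := by
      rw [Set.uIcc_of_le hσ.le]; exact fun x hx => hx.1
    exact h2.symm.mul_continuousOn (hwp.mono hsub)
  -- base constant
  set c1 := b * Real.exp (-a) with hc1
  have hc1pos : 0 < c1 := by rw [hc1]; exact mul_pos hb (Real.exp_pos _)
  -- KEY GENERIC ESTIMATE
  have keyGen : ∀ (q : ℝ → ℝ) (δ u z t : ℝ), 0 < δ → δ ≤ 1 → 0 ≤ u → u ≤ z → z + δ ≤ t →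
      IntervalIntegrable q volume u z → (∀ s ∈ Set.Icc u z, 0 ≤ q s) →
      (∀ s ∈ Set.Icc u z, q s ≤ w s ^ p) →
      c1 * δ * (∫ s in u..z, q s) ≤ t ^ γ * w t := by
    intro q δ u z t hδ0 hδ1 hu0 huz hzt hqint hqnn hqle
    rw [hc1]
    have htpos : 0 < t := by linarith
    have hA0 : 0 ≤ t - δ := by linarith
    set R := ∫ s in u..z, q s with hR
    have hR0 : 0 ≤ R := by rw [hR]; exact intervalIntegral.integral_nonneg huz hqnn
    set K := b * R * Real.exp (a * (t - δ)) * t ^ (-γ) with hK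
    -- continuity of exp(a·)w
    have hcontf : ContinuousOn (fun x => Real.exp (a*x) * w x) (Set.Icc (t-δ) t) := by
      apply ContinuousOn.mul
      · exact (Real.continuous_exp.comp (continuous_const.mul continuous_id)).continuousOn
      · exact hwc.mono (fun x hx => le_trans hA0 hx.1)
    have hderf : ∀ x ∈ Set.Ioo (t-δ) t, HasDerivAt (fun y => Real.exp (a*y) * w y)
        ((fun x => a * Real.exp (a*x) * w x + Real.exp (a*x) * deriv w x) x) x := by
      intro x hx
      have hx0 : 0 < x := lt_of_le_of_lt hA0 hx.1
      have he : HasDerivAt (fun s : ℝ => Real.exp (a*s)) (Real.exp (a*x) * a) x := by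
        simpa using ((hasDerivAt_id x).const_mul a).exp
      have h2 := he.mul (hd x hx0)
      have h3 : Real.exp (a*x) * a * w x + Real.exp (a*x) * deriv w x
          = (fun x => a * Real.exp (a*x) * w x + Real.exp (a*x) * deriv w x) x := by
        simp only []; ring
      exact h3 ▸ h2
    have hKle : ∀ x ∈ Set.Ioo (t-δ) t,
        K ≤ (fun x => a * Real.exp (a*x) * w x + Real.exp (a*x) * deriv w x) x := by
      intro x hx
      show K ≤ a * Real.exp (a*x) * w x + Real.exp (a*x) * deriv w x
      have hx0 : 0 < x := lt_of_le_of_lt hA0 hx.1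
      have hzx : z < x := lt_of_le_of_lt (by linarith) hx.1
      have hxi := hKint_int x hx0
      have hub : R * x^(-γ) ≤ ∫ s in (0:ℝ)..x, (x - s)^(-γ) * w s ^ p := by
        have hmono2 : (∫ s in u..z, x^(-γ) * q s) ≤ ∫ s in u..z, (x - s)^(-γ) * w s ^ p := by
          apply intervalIntegral.integral_mono_on huz (hqint.const_mul _)
            (hxi.mono_set ?_) ?_
          · rw [Set.uIcc_of_le huz, Set.uIcc_of_le hx0.le]
            exact Set.Icc_subset_Icc hu0 (le_of_lt hzx)
          · intro s hs
            have hsx : s < x := lt_of_le_of_lt hs.2 hzx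
            have hs0 : 0 ≤ s := le_trans hu0 hs.1
            exact mul_le_mul
              (Real.rpow_le_rpow_of_nonpos (by linarith) (by linarith) (by linarith))
              (hqle s hs) (hqnn s hs) (Real.rpow_nonneg (by linarith) _)
        have hmono1 : (∫ s in u..z, (x - s)^(-γ) * w s ^ p)
            ≤ ∫ s in (0:ℝ)..x, (x - s)^(-γ) * w s ^ p := by
          apply intervalIntegral.integral_mono_interval hu0 huz (le_of_lt hzx) ?_ hxi
          filter_upwards [ae_restrict_mem measurableSet_Ioc] with s hs
          exact hnn x s hs.2 (le_of_lt hs.1)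
        have hcm : (∫ s in u..z, x^(-γ) * q s) = x^(-γ) * R := by
          rw [hR]; exact intervalIntegral.integral_const_mul _ _
        calc R * x^(-γ) = x^(-γ) * R := by ring
          _ = ∫ s in u..z, x^(-γ) * q s := hcm.symm
          _ ≤ _ := le_trans hmono2 hmono1
      have hiq := hineq x hx0
      have hle2 : b * (R * x^(-γ)) ≤ deriv w x + a * w x :=
        le_trans (mul_le_mul_of_nonneg_left hub hb.le) hiq
      have hexp : Real.exp (a*(t-δ)) ≤ Real.exp (a*x) :=
        Real.exp_le_exp.2 (mul_le_mul_of_nonneg_left (le_of_lt hx.1) ha.le)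
      have hrp : t^(-γ) ≤ x^(-γ) :=
        Real.rpow_le_rpow_of_nonpos hx0 (le_of_lt hx.2) (by linarith)
      have hfin : K ≤ Real.exp (a*x) * (b * (R * x^(-γ))) := by
        rw [hK]
        calc b * R * Real.exp (a*(t-δ)) * t^(-γ)
            ≤ b * R * Real.exp (a*x) * x^(-γ) :=
              mul_le_mul (mul_le_mul_of_nonneg_left hexp (mul_nonneg hb.le hR0)) hrp
                (Real.rpow_nonneg htpos.le _)
                (mul_nonneg (mul_nonneg hb.le hR0) (Real.exp_nonneg _))
          _ = Real.exp (a*x) * (b * (R * x^(-γ))) := by ring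
      calc K ≤ Real.exp (a*x) * (b * (R * x^(-γ))) := hfin
        _ ≤ Real.exp (a*x) * (deriv w x + a * w x) :=
            mul_le_mul_of_nonneg_left hle2 (Real.exp_nonneg _)
        _ = a * Real.exp (a*x) * w x + Real.exp (a*x) * deriv w x := by ring
    have hstep : Real.exp (a*(t-δ)) * w (t-δ) + K * (t - (t-δ)) ≤ Real.exp (a*t) * w t :=
      helper_mono (f := fun x => Real.exp (a*x) * w x)
        (f' := fun x => a * Real.exp (a*x) * w x + Real.exp (a*x) * deriv w x)
        (by linarith) hcontf hderf hKle
    have hwpos : 0 < w (t-δ) := hpos _ hA0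
    have h7 : K * δ ≤ Real.exp (a*t) * w t := by
      have h44 : 0 < Real.exp (a*(t-δ)) * w (t-δ) := mul_pos (Real.exp_pos _) hwpos
      rw [show t - (t - δ) = δ from by ring] at hstep
      linarith [hstep, h44]
    have e1 : t ^ (-γ) * t ^ γ = 1 := by
      rw [← Real.rpow_add htpos, neg_add_cancel, Real.rpow_zero]
    have e2 : Real.exp (a*(t-δ)) * Real.exp (-(a*t)) = Real.exp (-(a*δ)) := by
      rw [← Real.exp_add]; congr 1; ring
    have e3 : Real.exp (-a) ≤ Real.exp (-(a*δ)) := by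
      apply Real.exp_le_exp.2
      have := mul_le_mul_of_nonneg_left hδ1 ha.le
      linarith
    have efin : b * Real.exp (-(a*δ)) * δ * R = (K * δ) * (t ^ γ * Real.exp (-(a*t))) := by
      rw [hK]
      calc b * Real.exp (-(a*δ)) * δ * R
          = b * R * δ * (Real.exp (a*(t-δ)) * Real.exp (-(a*t))) * (t^(-γ) * t^γ) := by
            rw [e2, e1]; ring
        _ = (b * R * Real.exp (a*(t-δ)) * t^(-γ) * δ) * (t ^ γ * Real.exp (-(a*t))) := by ring
    calc b * Real.exp (-a) * δ * R
        ≤ b * Real.exp (-(a*δ)) * δ * R := by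
          have h1 := mul_le_mul_of_nonneg_left e3 hb.le
          exact mul_le_mul_of_nonneg_right (mul_le_mul_of_nonneg_right h1 hδ0.le) hR0
      _ = (K * δ) * (t ^ γ * Real.exp (-(a*t))) := efin
      _ ≤ (Real.exp (a*t) * w t) * (t ^ γ * Real.exp (-(a*t))) :=
          mul_le_mul_of_nonneg_right h7
            (mul_nonneg (Real.rpow_nonneg htpos.le _) (Real.exp_nonneg _))
      _ = (t ^ γ * w t) * (Real.exp (a*t) * Real.exp (-(a*t))) := by ring
      _ = t ^ γ * w t := by rw [← Real.exp_add, add_neg_cancel, Real.exp_zero, mul_one]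
  -- the function g and its antiderivative G
  set g : ℝ → ℝ := fun s => s⁻¹ * (s ^ γ * w s) ^ p with hgd
  set G : ℝ → ℝ := fun x => ∫ s in (3:ℝ)..x, g s with hGd
  have hgcont : ContinuousOn g (Set.Ici 1) := by
    rw [hgd]
    apply ContinuousOn.mul
    · exact continuousOn_id.inv₀ (fun x hx => ne_of_gt (lt_of_lt_of_le one_pos hx))
    · apply ContinuousOn.rpow_const
      · apply ContinuousOn.mul
        · exact continuousOn_id.rpow_const
            (fun x hx => Or.inl (ne_of_gt (lt_of_lt_of_le one_pos hx)))
        · exact hwc.mono (fun x hx => Set.mem_Ici.mpr (le_trans zero_le_one (Set.mem_Ici.mp hx)))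
      · intro x hx
        have hx0 : (0:ℝ) < x := lt_of_lt_of_le one_pos hx
        exact Or.inl (ne_of_gt (mul_pos (Real.rpow_pos_of_pos hx0 γ) (hpos x hx0.le)))
  have hgnn : ∀ s : ℝ, 1 ≤ s → 0 ≤ g s := by
    intro s hs
    rw [hgd]
    exact mul_nonneg (inv_nonneg.2 (by linarith))
      (Real.rpow_nonneg
        (mul_nonneg (Real.rpow_nonneg (by linarith) _) (hpos s (Set.mem_Ici.mpr (by linarith))).le) _)
  have hglew : ∀ s : ℝ, 1 ≤ s → g s ≤ w s ^ p := by
    intro s hs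
    have hs0 : (0:ℝ) < s := by linarith
    have hwsp : 0 ≤ w s ^ p := Real.rpow_nonneg (hpos s (Set.mem_Ici.mpr (by linarith))).le _
    have e1 : (s ^ γ * w s) ^ p = s ^ (γ*p) * w s ^ p := by
      rw [Real.mul_rpow (Real.rpow_nonneg hs0.le _) (hpos s (Set.mem_Ici.mpr (by linarith))).le,
        ← Real.rpow_mul hs0.le]
    rw [hgd]
    simp only []
    rw [e1, ← mul_assoc]
    have e2 : s⁻¹ * s ^ (γ*p) = s ^ (γ*p - 1) := by
      rw [← Real.rpow_neg_one s, ← Real.rpow_add hs0]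
      ring_nf
    rw [e2]
    have e3 : s ^ (γ*p - 1) ≤ 1 := by
      apply Real.rpow_le_one_of_one_le_of_nonpos hs
      have : γ * p = p * γ := mul_comm _ _
      linarith
    calc s ^ (γ*p-1) * w s ^ p ≤ 1 * w s ^ p := mul_le_mul_of_nonneg_right e3 hwsp
      _ = w s ^ p := one_mul _
  have hgint : ∀ u v : ℝ, 1 ≤ u → 1 ≤ v → IntervalIntegrable g volume u v := by
    intro u v hu hv
    apply ContinuousOn.intervalIntegrable
    apply hgcont.mono
    intro s hs
    exact le_trans (le_min hu hv) hs.1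
  have Gnn : ∀ x : ℝ, 3 ≤ x → 0 ≤ G x := by
    intro x hx
    rw [hGd]
    exact intervalIntegral.integral_nonneg hx (fun s hs => hgnn s (by linarith [hs.1]))
  have Gmono : ∀ x y : ℝ, 3 ≤ x → x ≤ y → G x ≤ G y := by
    intro x y hx hxy
    have h := integral_add_adjacent_intervals (μ := volume) (f := g)
      (hgint 3 x (by norm_num) (by linarith)) (hgint x y (by linarith) (by linarith))
    have h2 : 0 ≤ ∫ s in x..y, g s :=
      intervalIntegral.integral_nonneg hxy (fun s hs => hgnn s (by linarith [hs.1]))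
    rw [hGd]
    simp only []
    linarith [h, h2]
  -- key0 : pointwise lower bound t^γ w t ≥ c0
  set c0 := c1 * m ^ p with hc0
  have hc0pos : 0 < c0 := by
    rw [hc0]; exact mul_pos hc1pos (Real.rpow_pos_of_pos hm0 _)
  have key0 : ∀ t : ℝ, 3 ≤ t → c0 ≤ t ^ γ * w t := by
    intro t ht
    have h := keyGen (fun _ => m ^ p) 1 0 1 t one_pos le_rfl le_rfl zero_le_one (by linarith)
      intervalIntegrable_const (fun s _ => Real.rpow_nonneg hm0.le p)
      (fun s hs => Real.rpow_le_rpow hm0.le (hm s hs) hp0.le)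
    have h' : c1 * 1 * (m ^ p) ≤ t ^ γ * w t := by simpa using h
    calc c0 = c1 * 1 * m ^ p := by rw [hc0]; ring
      _ ≤ t ^ γ * w t := h'
  -- key1 : t^γ w t ≥ c1 δ G z, packaged through F_gen below
  have F_gen : ∀ δ z x' x : ℝ, 0 < δ → δ ≤ 1 → 3 ≤ z → z + δ ≤ x' → x' ≤ x →
      G x' + (x - x') * x⁻¹ * (c1 * δ * G z) ^ p ≤ G x := by
    intro δ z x' x hδ0 hδ1 hz3 hzx' hx'x
    have hx'3 : 3 ≤ x' := by linarith
    have hx3 : 3 ≤ x := by linarith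
    have hGz0 : 0 ≤ G z := Gnn z hz3
    have hsplit : G x' + (∫ s in x'..x, g s) = G x := by
      rw [hGd]
      simp only []
      exact integral_add_adjacent_intervals
        (hgint 3 x' (by norm_num) (by linarith)) (hgint x' x (by linarith) (by linarith))
    have hpt : ∀ s ∈ Set.Icc x' x, x⁻¹ * (c1 * δ * G z) ^ p ≤ g s := by
      intro s hs
      have hs3 : 3 ≤ s := le_trans hx'3 hs.1
      have hs0 : (0:ℝ) < s := by linarith
      have hkey := keyGen g δ 3 z s hδ0 hδ1 (by norm_num) hz3 (le_trans hzx' hs.1)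
        (hgint 3 z (by norm_num) (by linarith))
        (fun r hr => hgnn r (by linarith [hr.1]))
        (fun r hr => hglew r (by linarith [hr.1]))
      have hkey2 : c1 * δ * G z ≤ s ^ γ * w s := by
        rw [hGd]; simp only []; exact hkey
      have h1 : (c1 * δ * G z) ^ p ≤ (s ^ γ * w s) ^ p :=
        Real.rpow_le_rpow (mul_nonneg (mul_nonneg hc1pos.le hδ0.le) hGz0) hkey2 hp0.le
      have h2 : x⁻¹ ≤ s⁻¹ := by
        apply inv_anti₀ hs0 hs.2
      have hgs : g s = s⁻¹ * (s ^ γ * w s) ^ p := by rw [hgd]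
      rw [hgs]
      exact mul_le_mul h2 h1
        (Real.rpow_nonneg (mul_nonneg (mul_nonneg hc1pos.le hδ0.le) hGz0) _)
        (inv_nonneg.2 hs0.le)
    have hmono3 : (∫ _ in x'..x, x⁻¹ * (c1 * δ * G z) ^ p) ≤ ∫ s in x'..x, g s :=
      intervalIntegral.integral_mono_on hx'x intervalIntegrable_const
        (hgint x' x (by linarith) (by linarith)) hpt
    have hconst : (∫ _ in x'..x, x⁻¹ * (c1 * δ * G z) ^ p)
        = (x - x') * (x⁻¹ * (c1 * δ * G z) ^ p) := by
      rw [intervalIntegral.integral_const, smul_eq_mul]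
    rw [hconst] at hmono3
    have hassoc : (x - x') * x⁻¹ * ((c1 * δ * G z) ^ p)
        = (x - x') * (x⁻¹ * ((c1 * δ * G z) ^ p)) := by ring
    linarith [hsplit, hmono3]
  -- logarithmic lower bound on G
  have Glog : ∀ x : ℝ, 3 ≤ x → c0 ^ p * (Real.log x - Real.log 3) ≤ G x := by
    intro x hx
    have hx0 : (0:ℝ) < x := by linarith
    have hpt : ∀ s ∈ Set.Icc (3:ℝ) x, c0 ^ p * s⁻¹ ≤ g s := by
      intro s hs
      have hs0 : (0:ℝ) < s := by linarith [hs.1]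
      have hkey := key0 s hs.1
      have h1 : c0 ^ p ≤ (s ^ γ * w s) ^ p := Real.rpow_le_rpow hc0pos.le hkey hp0.le
      have hgs : g s = s⁻¹ * (s ^ γ * w s) ^ p := by rw [hgd]
      rw [hgs]
      calc c0 ^ p * s⁻¹ = s⁻¹ * c0 ^ p := by ring
        _ ≤ s⁻¹ * (s ^ γ * w s) ^ p :=
            mul_le_mul_of_nonneg_left h1 (inv_nonneg.2 hs0.le)
    have hint1 : IntervalIntegrable (fun s : ℝ => c0 ^ p * s⁻¹) volume 3 x := by
      apply ContinuousOn.intervalIntegrable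
      apply ContinuousOn.mul continuousOn_const
      apply ContinuousOn.inv₀ continuousOn_id
      intro y hy
      rw [Set.uIcc_of_le (by linarith : (3:ℝ) ≤ x)] at hy
      have : (3:ℝ) ≤ y := hy.1
      exact ne_of_gt (by linarith : (0:ℝ) < y)
    have hmono := intervalIntegral.integral_mono_on (by linarith : (3:ℝ) ≤ x) hint1
      (hgint 3 x (by norm_num) (by linarith)) hpt
    have hval : ∫ s in (3:ℝ)..x, c0 ^ p * s⁻¹ = c0 ^ p * (Real.log x - Real.log 3) := by
      rw [intervalIntegral.integral_const_mul,
        integral_inv (Set.notMem_uIcc_of_lt (by norm_num) (by linarith)),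
        Real.log_div (ne_of_gt hx0) (by norm_num)]
    rw [hval] at hmono
    rw [hGd]
    exact hmono
  -- G is unbounded
  have Gbig : ∀ M : ℝ, ∃ x₁ : ℝ, 3 ≤ x₁ ∧ M ≤ G x₁ := by
    intro M
    have hc0p : (0:ℝ) < c0 ^ p := Real.rpow_pos_of_pos hc0pos p
    set x₁ := Real.exp (Real.log 3 + (max M 0 + 1) / c0 ^ p) with hx₁
    have hmax : (0:ℝ) ≤ max M 0 + 1 := by
      have := le_max_right M 0; linarith
    have h3 : (3:ℝ) ≤ x₁ := by
      rw [hx₁]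
      have hd0 : 0 ≤ (max M 0 + 1)/c0^p := div_nonneg hmax hc0p.le
      calc (3:ℝ) = Real.exp (Real.log 3) := (Real.exp_log (by norm_num)).symm
        _ ≤ _ := Real.exp_le_exp.2 (by linarith)
    refine ⟨x₁, h3, ?_⟩
    have hlog : Real.log x₁ = Real.log 3 + (max M 0 + 1)/c0^p := by
      rw [hx₁, Real.log_exp]
    have hG1 := Glog x₁ h3
    have hval : c0 ^ p * (Real.log x₁ - Real.log 3) = max M 0 + 1 := by
      rw [hlog]
      have h9 : Real.log 3 + (max M 0 + 1) / c0 ^ p - Real.log 3 = (max M 0 + 1) / c0 ^ p := by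
        ring
      rw [h9, mul_comm]
      exact div_mul_cancel₀ _ (ne_of_gt hc0p)
    rw [hval] at hG1
    have := le_max_left M 0
    linarith
  -- the doubling bootstrap
  set D := max 0 (-(Real.log (c1^p/2))/(p-1)) with hDd
  have hD0 : 0 ≤ D := le_max_left _ _
  have hD : -(Real.log (c1^p/2)) ≤ D*(p-1) := by
    have h := le_max_right 0 (-(Real.log (c1^p/2))/(p-1))
    rw [← hDd] at h
    exact (div_le_iff₀ (by linarith)).1 h
  obtain ⟨x₀, hx₀3, hx₀G⟩ := Gbig (Real.exp (D+1))
  have hc1p : (0:ℝ) < c1 ^ p := Real.rpow_pos_of_pos hc1pos p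
  have boot1 : ∀ n : ℕ, Real.exp (D + p ^ n) ≤ G ((x₀+2) * (2:ℝ)^n - 2) := by
    intro n
    induction n with
    | zero =>
      have h0 : (x₀ + 2) * (2:ℝ)^(0:ℕ) - 2 = x₀ := by norm_num
      rw [h0, pow_zero]
      exact hx₀G
    | succ n ih =>
      have h2n : (1:ℝ) ≤ (2:ℝ)^n := one_le_pow₀ (by norm_num)
      have hXn3 : 3 ≤ (x₀+2)*(2:ℝ)^n - 2 := by
        have h9 := mul_le_mul_of_nonneg_left h2n (by linarith : (0:ℝ) ≤ x₀+2)
        linarith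
      set X := (x₀+2)*(2:ℝ)^n - 2 with hXd
      have hXnext : (x₀+2)*(2:ℝ)^(n+1) - 2 = 2*X + 2 := by
        rw [hXd, pow_succ]; ring
      rw [hXnext]
      have hF := F_gen 1 X (X+1) (2*X+2) one_pos le_rfl hXn3 (by linarith) (by linarith)
      rw [mul_one] at hF
      have hcoef : (2*X+2 - (X+1)) * (2*X+2)⁻¹ = 1/2 := by
        have hne : (2*X+2) ≠ 0 := ne_of_gt (by linarith)
        field_simp
        ring
      rw [hcoef] at hF
      have hGx1 : 0 ≤ G (X+1) := Gnn (X+1) (by linarith)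
      have h2 : (c1 * Real.exp (D + p^n))^p ≤ (c1 * G X)^p :=
        Real.rpow_le_rpow (mul_nonneg hc1pos.le (Real.exp_nonneg _))
          (mul_le_mul_of_nonneg_left ih hc1pos.le) hp0.le
      have h3 : (c1 * Real.exp (D+p^n))^p = c1^p * Real.exp ((D+p^n)*p) := by
        rw [Real.mul_rpow hc1pos.le (Real.exp_nonneg _),
          Real.rpow_def_of_pos (Real.exp_pos _), Real.log_exp]
      have h4 : Real.exp (D + p^(n+1)) ≤ 1/2 * (c1^p * Real.exp ((D+p^n)*p)) := by
        have hpos2 : (0:ℝ) < c1^p/2 := by linarith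
        have heq : 1/2 * (c1^p * Real.exp ((D+p^n)*p))
            = Real.exp (Real.log (c1^p/2) + (D+p^n)*p) := by
          rw [Real.exp_add, Real.exp_log hpos2]; ring
        rw [heq]
        apply Real.exp_le_exp.2
        have e5 : (D + p^n)*p = D*p + p^(n+1) := by rw [pow_succ]; ring
        rw [e5]
        linarith [hD]
      calc Real.exp (D + p^(n+1)) ≤ 1/2 * (c1^p * Real.exp ((D+p^n)*p)) := h4
        _ = 1/2 * (c1*Real.exp (D+p^n))^p := by rw [h3]
        _ ≤ 1/2 * (c1 * G X)^p := by linarith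
        _ ≤ G (2*X+2) := by linarith
  -- the finite-horizon cascade
  set cbar := max 0 (-(Real.log c1)) with hcbd
  have hcbar0 : 0 ≤ cbar := le_max_left _ _
  set μ := (p+1)/2 with hμd
  have hμ1 : 1 < μ := by rw [hμd]; linarith
  have hμp : μ < p := by rw [hμd]; linarith
  have hpμ : 0 < p - μ := by linarith
  have hμ1m : 0 < μ - 1 := by linarith
  have hlog2pos : (0:ℝ) < Real.log 2 := Real.log_pos (by norm_num)
  have hC3pos : 0 < (1+p)*Real.log 2 := mul_pos (by linarith) hlog2pos
  set A₀ := 1 + ((1+p)*Real.log 2 + cbar*p + Real.log (x₀+2))/(p-μ)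
      + ((1+p)*Real.log 2)/((p-μ)*(μ-1)) with hA₀d
  set B₀ := Real.log 2/(p-μ) with hB₀d
  obtain ⟨N, hN⟩ := helper_growth hp A₀ B₀
  set X := (x₀+2)*(2:ℝ)^N - 2 with hXdef
  have h2N : (1:ℝ) ≤ (2:ℝ)^N := one_le_pow₀ (by norm_num)
  have hX3 : 3 ≤ X := by
    have h9 := mul_le_mul_of_nonneg_left h2N (by linarith : (0:ℝ) ≤ x₀+2)
    rw [hXdef]; linarith
  have hX2pos : (0:ℝ) < X + 2 := by linarith
  have hlogX2 : 0 ≤ Real.log (X+2) := Real.log_nonneg (by linarith)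
  set Q := 1 + ((1+p)*Real.log 2 + cbar*p + Real.log (X+2))/(p-μ)
      + ((1+p)*Real.log 2)/((p-μ)*(μ-1)) with hQd
  have hT1 : 0 ≤ ((1+p)*Real.log 2 + cbar*p + Real.log (X+2))/(p-μ) := by
    apply div_nonneg _ hpμ.le
    have := mul_nonneg hcbar0 hp0.le
    linarith [hC3pos.le]
  have hT2 : 0 ≤ ((1+p)*Real.log 2)/((p-μ)*(μ-1)) :=
    div_nonneg hC3pos.le (mul_nonneg hpμ.le hμ1m.le)
  have hQ1 : 1 ≤ Q := by rw [hQd]; linarith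
  have hQa : (1+p)*Real.log 2 + cbar*p + Real.log (X+2) ≤ Q*(p-μ) := by
    have h1 : ((1+p)*Real.log 2 + cbar*p + Real.log (X+2))/(p-μ) ≤ Q := by
      rw [hQd]; linarith
    exact (div_le_iff₀ hpμ).1 h1
  have hQb : (1+p)*Real.log 2 ≤ Q*(p-μ)*(μ-1) := by
    have h1 : ((1+p)*Real.log 2)/((p-μ)*(μ-1)) ≤ Q := by
      rw [hQd]; linarith
    have h2 := (div_le_iff₀ (mul_pos hpμ hμ1m)).1 h1
    calc (1+p)*Real.log 2 ≤ Q*((p-μ)*(μ-1)) := h2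
      _ = Q*(p-μ)*(μ-1) := (mul_assoc _ _ _).symm
  have hseed : Real.exp Q ≤ G X := by
    have hXp2 : X + 2 = (x₀+2)*(2:ℝ)^N := by rw [hXdef]; ring
    have hlogX2eq : Real.log (X+2) = Real.log (x₀+2) + (N:ℝ)*Real.log 2 := by
      rw [hXp2, Real.log_mul (ne_of_gt (by linarith : (0:ℝ) < x₀+2)) (by positivity),
        Real.log_pow]
    have hQeq : Q = A₀ + B₀*(N:ℝ) := by
      rw [hQd, hA₀d, hB₀d, hlogX2eq]; ring
    have hQle : Q ≤ D + p^N := by rw [hQeq]; linarith [hN, hD0]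
    have hb1 := boot1 N
    rw [← hXdef] at hb1
    exact le_trans (Real.exp_le_exp.2 hQle) hb1
  set y : ℕ → ℝ := fun n => X + 2 - 2*(1/2:ℝ)^n with hyd
  have hyX : ∀ n : ℕ, X ≤ y n ∧ y n ≤ X + 2 := by
    intro n
    have h1 : (0:ℝ) < (1/2:ℝ)^n := by positivity
    have h2 : ((1/2:ℝ))^n ≤ 1 := pow_le_one₀ (by norm_num) (by norm_num)
    constructor
    · rw [hyd]; simp only []; linarith
    · rw [hyd]; simp only []; linarith
  have inv : ∀ n : ℕ, Real.exp (Q*μ^n) ≤ G (y n) := by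
    intro n
    induction n with
    | zero =>
      have h0 : y 0 = X := by rw [hyd]; norm_num
      rw [h0, pow_zero, mul_one]
      exact hseed
    | succ n ih =>
      set δ := (1/2:ℝ)^(n+1) with hδd
      have hδpos : (0:ℝ) < δ := by rw [hδd]; positivity
      have hδ1 : δ ≤ 1 := by rw [hδd]; exact pow_le_one₀ (by norm_num) (by norm_num)
      have hyn3 : 3 ≤ y n := le_trans hX3 (hyX n).1
      have hystep : y (n+1) = y n + 2*δ := by
        rw [hδd, hyd]; simp only []; rw [pow_succ]; ring
      have hyb : y n + 2*δ ≤ X + 2 := by rw [← hystep]; exact (hyX (n+1)).2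
      have hypos : (0:ℝ) < y n + 2*δ := by linarith
      have hF := F_gen δ (y n) (y n + δ) (y n + 2*δ) hδpos hδ1 hyn3 le_rfl (by linarith)
      rw [show y n + 2*δ - (y n + δ) = δ by ring] at hF
      have hGyδ : 0 ≤ G (y n + δ) := Gnn _ (by linarith)
      have hcd : 0 ≤ c1 * δ := (mul_pos hc1pos hδpos).le
      have h2' : (c1*δ*Real.exp (Q*μ^n))^p ≤ (c1*δ*G (y n))^p :=
        Real.rpow_le_rpow (mul_nonneg hcd (Real.exp_nonneg _))
          (mul_le_mul_of_nonneg_left ih hcd) hp0.le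
      have hxinv : (X+2)⁻¹ ≤ (y n + 2*δ)⁻¹ := inv_anti₀ hypos hyb
      have hlogδ : Real.log δ = -(((n:ℝ)+1) * Real.log 2) := by
        rw [hδd, show (1/2:ℝ) = 2⁻¹ by norm_num, Real.log_pow, Real.log_inv]
        push_cast; ring
      have hlogprod : Real.log (c1*δ*Real.exp (Q*μ^n))
          = Real.log c1 + Real.log δ + Q*μ^n := by
        rw [Real.log_mul (ne_of_gt (mul_pos hc1pos hδpos)) (Real.exp_ne_zero _),
          Real.log_mul (ne_of_gt hc1pos) (ne_of_gt hδpos), Real.log_exp]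
      have e1 : (c1*δ*Real.exp (Q*μ^n))^p
          = Real.exp ((Real.log c1 + Real.log δ + Q*μ^n)*p) := by
        rw [Real.rpow_def_of_pos (mul_pos (mul_pos hc1pos hδpos) (Real.exp_pos _)),
          hlogprod]
      have e2 : δ*(X+2)⁻¹*Real.exp ((Real.log c1 + Real.log δ + Q*μ^n)*p)
          = Real.exp (Real.log δ - Real.log (X+2)
            + (Real.log c1 + Real.log δ + Q*μ^n)*p) := by
        rw [Real.exp_add, Real.exp_sub, Real.exp_log hδpos, Real.exp_log hX2pos]
        ring
      have hbern : 1 + (n:ℝ)*(μ-1) ≤ μ^n := by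
        have h := one_add_mul_le_pow (show (-2:ℝ) ≤ μ - 1 by linarith) n
        rwa [show (1:ℝ) + (μ-1) = μ by ring] at h
      have hQp : 0 ≤ Q*(p-μ) := mul_nonneg (by linarith) hpμ.le
      have hmain : ((1+p)*Real.log 2)*((n:ℝ)+1) + Real.log (X+2) + cbar*p
          ≤ Q*μ^n*(p-μ) := by
        have h5 := mul_le_mul_of_nonneg_left hQb (Nat.cast_nonneg n : (0:ℝ) ≤ (n:ℝ))
        calc ((1+p)*Real.log 2)*((n:ℝ)+1) + Real.log (X+2) + cbar*p
            = ((1+p)*Real.log 2 + cbar*p + Real.log (X+2))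
              + (n:ℝ)*((1+p)*Real.log 2) := by ring
          _ ≤ Q*(p-μ) + (n:ℝ)*(Q*(p-μ)*(μ-1)) := by linarith
          _ = Q*(p-μ)*(1 + (n:ℝ)*(μ-1)) := by ring
          _ ≤ Q*(p-μ)*μ^n := mul_le_mul_of_nonneg_left hbern hQp
          _ = Q*μ^n*(p-μ) := by ring
      have hcb2 : -cbar * p ≤ Real.log c1 * p := by
        apply mul_le_mul_of_nonneg_right _ hp0.le
        have := le_max_right 0 (-(Real.log c1))
        rw [← hcbd] at this
        linarith
      have hexpineq : Q*μ^(n+1) ≤ Real.log δ - Real.log (X+2)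
          + (Real.log c1 + Real.log δ + Q*μ^n)*p := by
        rw [hlogδ, pow_succ]
        linarith [hmain, hcb2]
      rw [hystep]
      calc Real.exp (Q*μ^(n+1))
          ≤ Real.exp (Real.log δ - Real.log (X+2)
            + (Real.log c1 + Real.log δ + Q*μ^n)*p) := Real.exp_le_exp.2 hexpineq
        _ = δ*(X+2)⁻¹*(c1*δ*Real.exp (Q*μ^n))^p := by rw [e1]; exact e2.symm
        _ ≤ δ*(y n + 2*δ)⁻¹*(c1*δ*Real.exp (Q*μ^n))^p := by
            apply mul_le_mul_of_nonneg_right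
              (mul_le_mul_of_nonneg_left hxinv hδpos.le)
              (Real.rpow_nonneg (mul_nonneg hcd (Real.exp_nonneg _)) _)
        _ ≤ δ*(y n + 2*δ)⁻¹*(c1*δ*G (y n))^p :=
            mul_le_mul_of_nonneg_left h2'
              (mul_nonneg hδpos.le (inv_nonneg.2 hypos.le))
        _ ≤ G (y n + 2*δ) := by linarith [hF, hGyδ]
  -- final contradiction
  obtain ⟨n, hn⟩ := pow_unbounded_of_one_lt (Real.log (G (X+2))) hμ1
  have hXyn : 3 ≤ y n := le_trans hX3 (hyX n).1
  have hGy := Gmono (y n) (X+2) hXyn (hyX n).2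
  have hinv := inv n
  have hGpos : 0 < G (X+2) := lt_of_lt_of_le (Real.exp_pos _) (le_trans hinv hGy)
  have hQμ : μ^n ≤ Q*μ^n := le_mul_of_one_le_left (pow_nonneg (by linarith) n) hQ1
  have hcontr : G (X+2) < G (X+2) := by
    calc G (X+2) = Real.exp (Real.log (G (X+2))) := (Real.exp_log hGpos).symm
      _ < Real.exp (Q*μ^n) := Real.exp_lt_exp.2 (lt_of_lt_of_le hn hQμ)
      _ ≤ G (y n) := hinv
      _ ≤ G (X+2) := hGy
  exact absurd hcontr (lt_irrefl _)
end

section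
/- For $\varepsilon > 0$, $A > 0$, $c > 0$, and $n \ge 1$, define $\Theta(x,y,\tau) = c\, e^{-\varepsilon\sqrt{A + (|x|^2+|y|^2)^2 + \tau^2}}$ on $\mathbb{H}^n = \mathbb{R}^n \times \mathbb{R}^n \times \mathbb{R}$. Then $\Delta_{\mathbb{H}}\Theta(\eta) \ge -2\varepsilon(Q+2)\,\Theta(\eta)$ for all $\eta \in \mathbb{H}^n$, where $Q = 2n+2$. -/
open Real

/-- The Heisenberg sub-Laplacian
`Δ_H = Δ_x + Δ_y + 4(|x|²+|y|²)∂_τ² + 4∑ᵢ (xᵢ ∂²_{yᵢτ} - yᵢ ∂²_{xᵢτ})`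
acting on a function of coordinates `(x, y, τ) ∈ ℝⁿ × ℝⁿ × ℝ`. -/
noncomputable def subLaplacian (n : ℕ) (f : (Fin n → ℝ) → (Fin n → ℝ) → ℝ → ℝ)
    (x y : Fin n → ℝ) (τ : ℝ) : ℝ :=
  (∑ i, deriv (fun s => deriv (fun u => f (Function.update x i u) y τ) s) (x i)) +
  (∑ i, deriv (fun s => deriv (fun u => f x (Function.update y i u) τ) s) (y i)) +
  4 * (∑ i, (x i) ^ 2 + ∑ i, (y i) ^ 2) *
    deriv (fun s => deriv (fun u => f x y u) s) τ +
  4 * ∑ i, (x i * deriv (fun s => deriv (fun u => f x (Function.update y i u) s) (y i)) τ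
          - y i * deriv (fun s => deriv (fun u => f (Function.update x i u) y s) (x i)) τ)

noncomputable def P1 (ε c t : ℝ) : ℝ :=
  -(ε * c / (2 * Real.sqrt t)) * Real.exp (-(ε * Real.sqrt t))

noncomputable def P2 (ε c t : ℝ) : ℝ :=
  (ε ^ 2 / (4 * t) + ε / (4 * t * Real.sqrt t)) * (c * Real.exp (-(ε * Real.sqrt t)))

lemma hasDerivAt_Phi (ε c : ℝ) {t : ℝ} (ht : 0 < t) :
    HasDerivAt (fun t => c * Real.exp (-(ε * Real.sqrt t))) (P1 ε c t) t := by
  have h1 : HasDerivAt Real.sqrt (1 / (2 * Real.sqrt t)) t := Real.hasDerivAt_sqrt ht.ne'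
  have h5 := (((h1.const_mul ε).neg).exp).const_mul c
  refine h5.congr_deriv ?_
  have hs : Real.sqrt t ≠ 0 := (Real.sqrt_pos.mpr ht).ne'
  unfold P1
  simp only [Pi.neg_apply]
  field_simp

lemma hasDerivAt_P1 (ε c : ℝ) {t : ℝ} (ht : 0 < t) :
    HasDerivAt (P1 ε c) (P2 ε c t) t := by
  have hs : Real.sqrt t ≠ 0 := (Real.sqrt_pos.mpr ht).ne'
  have h2 : Real.sqrt t ^ 2 = t := Real.sq_sqrt ht.le
  have hm : Real.sqrt t * Real.sqrt t = t := Real.mul_self_sqrt ht.le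
  have h1 : HasDerivAt Real.sqrt (1 / (2 * Real.sqrt t)) t := Real.hasDerivAt_sqrt ht.ne'
  have hinv : HasDerivAt (fun t => (Real.sqrt t)⁻¹)
      (-(1 / (2 * Real.sqrt t)) / (Real.sqrt t) ^ 2) t := h1.inv hs
  have hexp : HasDerivAt (fun t => Real.exp (-(ε * Real.sqrt t)))
      (Real.exp (-(ε * Real.sqrt t)) * -(ε * (1 / (2 * Real.sqrt t)))) t :=
    ((h1.const_mul ε).neg).exp
  have hE : P1 ε c = fun t => (-(ε * c) / 2) * ((Real.sqrt t)⁻¹ * Real.exp (-(ε * Real.sqrt t))) := by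
    funext t
    unfold P1
    rw [div_eq_mul_inv, mul_inv]
    ring
  rw [hE]
  refine ((hinv.mul hexp).const_mul (-(ε * c) / 2)).congr_deriv ?_
  unfold P2
  set q := Real.sqrt t with hq
  rw [← h2]
  field_simp
  ring

lemma P2_pos {ε c : ℝ} (hε : 0 < ε) (hc : 0 < c) {t : ℝ} (ht : 0 < t) : 0 < P2 ε c t := by
  have := Real.sqrt_pos.mpr ht
  unfold P2
  positivity

-- first derivative of u ↦ c e^{-ε√(A+(K+u²)²+T)}
lemma hasDerivAt_F (ε c A K T : ℝ) (hA : 0 < A) (hT : 0 ≤ T) (u : ℝ) :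
    HasDerivAt (fun u => c * Real.exp (-(ε * Real.sqrt (A + (K + u ^ 2) ^ 2 + T))))
      (P1 ε c (A + (K + u ^ 2) ^ 2 + T) * (4 * u * (K + u ^ 2))) u := by
  have hg : HasDerivAt (fun u : ℝ => A + (K + u ^ 2) ^ 2 + T)
      (4 * u * (K + u ^ 2)) u := by
    have := ((((hasDerivAt_pow 2 u).const_add K).pow 2).const_add A).add_const T
    refine this.congr_deriv ?_
    push_cast
    ring
  have hgpos : 0 < A + (K + u ^ 2) ^ 2 + T := by positivity
  have hΦ := hasDerivAt_Phi ε c hgpos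
  have h := hΦ.comp u hg
  exact h

lemma hasDerivAt_F' (ε c A K T : ℝ) (hA : 0 < A) (hT : 0 ≤ T) (u : ℝ) :
    HasDerivAt (fun s => P1 ε c (A + (K + s ^ 2) ^ 2 + T) * (4 * s * (K + s ^ 2)))
      (P2 ε c (A + (K + u ^ 2) ^ 2 + T) * (4 * u * (K + u ^ 2)) ^ 2
        + P1 ε c (A + (K + u ^ 2) ^ 2 + T) * (4 * (K + u ^ 2) + 8 * u ^ 2)) u := by
  have hg : HasDerivAt (fun u : ℝ => A + (K + u ^ 2) ^ 2 + T)
      (4 * u * (K + u ^ 2)) u := by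
    have := ((((hasDerivAt_pow 2 u).const_add K).pow 2).const_add A).add_const T
    refine this.congr_deriv ?_
    push_cast
    ring
  have hgpos : 0 < A + (K + u ^ 2) ^ 2 + T := by positivity
  have h1 : HasDerivAt (fun s => P1 ε c (A + (K + s ^ 2) ^ 2 + T))
      (P2 ε c (A + (K + u ^ 2) ^ 2 + T) * (4 * u * (K + u ^ 2))) u :=
    by have h := (hasDerivAt_P1 ε c hgpos).comp u hg; exact h
  have h2 : HasDerivAt (fun s : ℝ => 4 * s * (K + s ^ 2))
      (4 * (K + u ^ 2) + (4 * u) * (2 * u)) u := by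
    have ha : HasDerivAt (fun s : ℝ => 4 * s) 4 u := by
      simpa using (hasDerivAt_id u).const_mul 4
    have hb : HasDerivAt (fun s : ℝ => K + s ^ 2) (2 * u) u := by
      have := (hasDerivAt_pow 2 u).const_add K
      refine this.congr_deriv ?_
      push_cast
      ring
    exact ha.mul hb
  refine (h1.mul h2).congr_deriv ?_
  ring

-- second derivative via deriv
lemma deriv2_F (ε c A K T : ℝ) (hA : 0 < A) (hT : 0 ≤ T) (u : ℝ) :
    deriv (fun s => deriv (fun u => c * Real.exp (-(ε * Real.sqrt (A + (K + u ^ 2) ^ 2 + T)))) s) u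
      = P2 ε c (A + (K + u ^ 2) ^ 2 + T) * (4 * u * (K + u ^ 2)) ^ 2
        + P1 ε c (A + (K + u ^ 2) ^ 2 + T) * (4 * (K + u ^ 2) + 8 * u ^ 2) := by
  have hfun : (fun s => deriv (fun u => c * Real.exp (-(ε * Real.sqrt (A + (K + u ^ 2) ^ 2 + T)))) s)
      = fun s => P1 ε c (A + (K + s ^ 2) ^ 2 + T) * (4 * s * (K + s ^ 2)) := by
    funext s
    exact (hasDerivAt_F ε c A K T hA hT s).deriv
  rw [hfun]
  exact (hasDerivAt_F' ε c A K T hA hT u).deriv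

-- first derivative of u ↦ c e^{-ε√(B+u²)}
lemma hasDerivAt_H (ε c B : ℝ) (hB : 0 < B) (u : ℝ) :
    HasDerivAt (fun u => c * Real.exp (-(ε * Real.sqrt (B + u ^ 2))))
      (P1 ε c (B + u ^ 2) * (2 * u)) u := by
  have hg : HasDerivAt (fun u : ℝ => B + u ^ 2) (2 * u) u := by
    have := (hasDerivAt_pow 2 u).const_add B
    refine this.congr_deriv ?_
    push_cast
    ring
  have hgpos : 0 < B + u ^ 2 := by positivity
  have h := (hasDerivAt_Phi ε c hgpos).comp u hg
  exact h

lemma deriv2_H (ε c B : ℝ) (hB : 0 < B) (u : ℝ) :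
    deriv (fun s => deriv (fun v => c * Real.exp (-(ε * Real.sqrt (B + v ^ 2)))) s) u
      = P2 ε c (B + u ^ 2) * (2 * u) ^ 2 + P1 ε c (B + u ^ 2) * 2 := by
  have hfun : (fun s => deriv (fun v => c * Real.exp (-(ε * Real.sqrt (B + v ^ 2)))) s)
      = fun s => P1 ε c (B + s ^ 2) * (2 * s) := by
    funext s
    exact (hasDerivAt_H ε c B hB s).deriv
  rw [hfun]
  have hg : HasDerivAt (fun u : ℝ => B + u ^ 2) (2 * u) u := by
    have := (hasDerivAt_pow 2 u).const_add B
    refine this.congr_deriv ?_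
    push_cast
    ring
  have hgpos : 0 < B + u ^ 2 := by positivity
  have h1 : HasDerivAt (fun s => P1 ε c (B + s ^ 2)) (P2 ε c (B + u ^ 2) * (2 * u)) u :=
    by have h := (hasDerivAt_P1 ε c hgpos).comp u hg; exact h
  have h2 : HasDerivAt (fun s : ℝ => 2 * s) 2 u := by
    simpa using (hasDerivAt_id u).const_mul 2
  have h3 : HasDerivAt (fun s => P1 ε c (B + s ^ 2) * (2 * s)) _ u := h1.mul h2
  rw [h3.deriv]
  ring

lemma sum_update_sq {n : ℕ} (x : Fin n → ℝ) (i : Fin n) (u : ℝ) :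
    ∑ j, Function.update x i u j ^ 2 = (∑ j, x j ^ 2) - x i ^ 2 + u ^ 2 := by
  have h : ∀ j, Function.update x i u j ^ 2
      = Function.update (fun j => x j ^ 2) i (u ^ 2) j := fun j =>
    Function.apply_update (fun _ v => v ^ 2) x i u j
  simp_rw [h]
  rw [Finset.sum_update_of_mem (Finset.mem_univ i)]
  have h2 : ∑ j, x j ^ 2 = x i ^ 2 + ∑ j ∈ Finset.univ.erase i, x j ^ 2 :=
    (Finset.add_sum_erase _ _ (Finset.mem_univ i)).symm
  rw [← Finset.erase_eq]
  linarith

theorem subLaplacian_exp_lower_bound (n : ℕ) (hn : 1 ≤ n) (ε A c : ℝ)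
    (hε : 0 < ε) (hA : 0 < A) (hc : 0 < c) :
    ∀ (x y : Fin n → ℝ) (τ : ℝ),
      subLaplacian n
        (fun x y τ =>
          c * Real.exp (-(ε * Real.sqrt (A + (∑ i, (x i) ^ 2 + ∑ i, (y i) ^ 2) ^ 2 + τ ^ 2))))
        x y τ
      ≥ -(2 * ε * ((2 * n + 2 : ℝ) + 2)) *
        (c * Real.exp (-(ε * Real.sqrt (A + (∑ i, (x i) ^ 2 + ∑ i, (y i) ^ 2) ^ 2 + τ ^ 2)))) := by
  intro x y τ
  simp only [subLaplacian]
  set S := ∑ i, x i ^ 2 + ∑ i, y i ^ 2 with hSdef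
  -- second derivatives in the x directions
  have hxterm : ∀ i : Fin n,
      deriv (fun s => deriv (fun u => c * Real.exp
        (-(ε * Real.sqrt (A + (∑ j, Function.update x i u j ^ 2 + ∑ j, y j ^ 2) ^ 2 + τ ^ 2)))) s)
        (x i)
      = P2 ε c (A + S ^ 2 + τ ^ 2) * (4 * x i * S) ^ 2
        + P1 ε c (A + S ^ 2 + τ ^ 2) * (4 * S + 8 * x i ^ 2) := by
    intro i
    have hfun : (fun u : ℝ => c * Real.exp
        (-(ε * Real.sqrt (A + (∑ j, Function.update x i u j ^ 2 + ∑ j, y j ^ 2) ^ 2 + τ ^ 2))))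
        = fun u => c * Real.exp
            (-(ε * Real.sqrt (A + ((S - x i ^ 2) + u ^ 2) ^ 2 + τ ^ 2))) := by
      funext u
      rw [sum_update_sq x i u,
        show (∑ j, x j ^ 2) - x i ^ 2 + u ^ 2 + ∑ j, y j ^ 2 = (S - x i ^ 2) + u ^ 2 by
          rw [hSdef]; ring]
    rw [hfun, deriv2_F ε c A (S - x i ^ 2) (τ ^ 2) hA (sq_nonneg τ) (x i),
      show S - x i ^ 2 + x i ^ 2 = S by ring]
  -- second derivatives in the y directions
  have hyterm : ∀ i : Fin n,
      deriv (fun s => deriv (fun u => c * Real.exp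
        (-(ε * Real.sqrt (A + (∑ j, x j ^ 2 + ∑ j, Function.update y i u j ^ 2) ^ 2 + τ ^ 2)))) s)
        (y i)
      = P2 ε c (A + S ^ 2 + τ ^ 2) * (4 * y i * S) ^ 2
        + P1 ε c (A + S ^ 2 + τ ^ 2) * (4 * S + 8 * y i ^ 2) := by
    intro i
    have hfun : (fun u : ℝ => c * Real.exp
        (-(ε * Real.sqrt (A + (∑ j, x j ^ 2 + ∑ j, Function.update y i u j ^ 2) ^ 2 + τ ^ 2))))
        = fun u => c * Real.exp
            (-(ε * Real.sqrt (A + ((S - y i ^ 2) + u ^ 2) ^ 2 + τ ^ 2))) := by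
      funext u
      rw [sum_update_sq y i u,
        show (∑ j, x j ^ 2) + ((∑ j, y j ^ 2) - y i ^ 2 + u ^ 2) = (S - y i ^ 2) + u ^ 2 by
          rw [hSdef]; ring]
    rw [hfun, deriv2_F ε c A (S - y i ^ 2) (τ ^ 2) hA (sq_nonneg τ) (y i),
      show S - y i ^ 2 + y i ^ 2 = S by ring]
  -- mixed terms vanish
  have hmix : ∀ i : Fin n,
      (x i * deriv (fun s => deriv (fun u => c * Real.exp
          (-(ε * Real.sqrt (A + (∑ j, x j ^ 2 + ∑ j, Function.update y i u j ^ 2) ^ 2 + s ^ 2))))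
          (y i)) τ
        - y i * deriv (fun s => deriv (fun u => c * Real.exp
          (-(ε * Real.sqrt (A + (∑ j, Function.update x i u j ^ 2 + ∑ j, y j ^ 2) ^ 2 + s ^ 2))))
          (x i)) τ) = 0 := by
    intro i
    have hfy : (fun s : ℝ => deriv (fun u => c * Real.exp
        (-(ε * Real.sqrt (A + (∑ j, x j ^ 2 + ∑ j, Function.update y i u j ^ 2) ^ 2 + s ^ 2))))
        (y i))
        = fun s => P1 ε c (A + S ^ 2 + s ^ 2) * (4 * y i * S) := by
      funext s
      have hfun : (fun u : ℝ => c * Real.exp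
          (-(ε * Real.sqrt (A + (∑ j, x j ^ 2 + ∑ j, Function.update y i u j ^ 2) ^ 2 + s ^ 2))))
          = fun u => c * Real.exp
              (-(ε * Real.sqrt (A + ((S - y i ^ 2) + u ^ 2) ^ 2 + s ^ 2))) := by
        funext u
        rw [sum_update_sq y i u,
          show (∑ j, x j ^ 2) + ((∑ j, y j ^ 2) - y i ^ 2 + u ^ 2) = (S - y i ^ 2) + u ^ 2 by
            rw [hSdef]; ring]
      rw [hfun, (hasDerivAt_F ε c A (S - y i ^ 2) (s ^ 2) hA (sq_nonneg s) (y i)).deriv,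
        show S - y i ^ 2 + y i ^ 2 = S by ring]
    have hfx : (fun s : ℝ => deriv (fun u => c * Real.exp
        (-(ε * Real.sqrt (A + (∑ j, Function.update x i u j ^ 2 + ∑ j, y j ^ 2) ^ 2 + s ^ 2))))
        (x i))
        = fun s => P1 ε c (A + S ^ 2 + s ^ 2) * (4 * x i * S) := by
      funext s
      have hfun : (fun u : ℝ => c * Real.exp
          (-(ε * Real.sqrt (A + (∑ j, Function.update x i u j ^ 2 + ∑ j, y j ^ 2) ^ 2 + s ^ 2))))
          = fun u => c * Real.exp
              (-(ε * Real.sqrt (A + ((S - x i ^ 2) + u ^ 2) ^ 2 + s ^ 2))) := by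
        funext u
        rw [sum_update_sq x i u,
          show (∑ j, x j ^ 2) - x i ^ 2 + u ^ 2 + ∑ j, y j ^ 2 = (S - x i ^ 2) + u ^ 2 by
            rw [hSdef]; ring]
      rw [hfun, (hasDerivAt_F ε c A (S - x i ^ 2) (s ^ 2) hA (sq_nonneg s) (x i)).deriv,
        show S - x i ^ 2 + x i ^ 2 = S by ring]
    rw [hfy, hfx, deriv_mul_const_field, deriv_mul_const_field]
    ring
  -- τ second derivative
  have hS : 0 ≤ S := by
    rw [hSdef]
    have h1 : (0:ℝ) ≤ ∑ i, x i ^ 2 := Finset.sum_nonneg fun i _ => sq_nonneg _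
    have h2 : (0:ℝ) ≤ ∑ i, y i ^ 2 := Finset.sum_nonneg fun i _ => sq_nonneg _
    linarith
  have hB : (0:ℝ) < A + S ^ 2 := by positivity
  have hτterm := deriv2_H ε c (A + S ^ 2) hB τ
  rw [Finset.sum_congr rfl (fun i _ => hxterm i), Finset.sum_congr rfl (fun i _ => hyterm i),
    hτterm, Finset.sum_congr rfl (fun i _ => hmix i), Finset.sum_const]
  simp only [smul_zero, mul_zero, add_zero]
  -- simplify the sums
  have e1 : ∑ i, (P2 ε c (A + S ^ 2 + τ ^ 2) * (4 * x i * S) ^ 2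
      + P1 ε c (A + S ^ 2 + τ ^ 2) * (4 * S + 8 * x i ^ 2))
      = P2 ε c (A + S ^ 2 + τ ^ 2) * (16 * S ^ 2) * (∑ i, x i ^ 2)
        + P1 ε c (A + S ^ 2 + τ ^ 2) * 8 * (∑ i, x i ^ 2)
        + (n : ℝ) * (P1 ε c (A + S ^ 2 + τ ^ 2) * (4 * S)) := by
    rw [Finset.sum_congr rfl (fun i _ => show
      P2 ε c (A + S ^ 2 + τ ^ 2) * (4 * x i * S) ^ 2
        + P1 ε c (A + S ^ 2 + τ ^ 2) * (4 * S + 8 * x i ^ 2)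
      = (P2 ε c (A + S ^ 2 + τ ^ 2) * (16 * S ^ 2)) * (x i ^ 2)
        + (P1 ε c (A + S ^ 2 + τ ^ 2) * 8) * (x i ^ 2)
        + (P1 ε c (A + S ^ 2 + τ ^ 2) * (4 * S)) from by ring)]
    rw [Finset.sum_add_distrib, Finset.sum_add_distrib, ← Finset.mul_sum, ← Finset.mul_sum,
      Finset.sum_const, Finset.card_univ, Fintype.card_fin, nsmul_eq_mul]
  have e2 : ∑ i, (P2 ε c (A + S ^ 2 + τ ^ 2) * (4 * y i * S) ^ 2
      + P1 ε c (A + S ^ 2 + τ ^ 2) * (4 * S + 8 * y i ^ 2))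
      = P2 ε c (A + S ^ 2 + τ ^ 2) * (16 * S ^ 2) * (∑ i, y i ^ 2)
        + P1 ε c (A + S ^ 2 + τ ^ 2) * 8 * (∑ i, y i ^ 2)
        + (n : ℝ) * (P1 ε c (A + S ^ 2 + τ ^ 2) * (4 * S)) := by
    rw [Finset.sum_congr rfl (fun i _ => show
      P2 ε c (A + S ^ 2 + τ ^ 2) * (4 * y i * S) ^ 2
        + P1 ε c (A + S ^ 2 + τ ^ 2) * (4 * S + 8 * y i ^ 2)
      = (P2 ε c (A + S ^ 2 + τ ^ 2) * (16 * S ^ 2)) * (y i ^ 2)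
        + (P1 ε c (A + S ^ 2 + τ ^ 2) * 8) * (y i ^ 2)
        + (P1 ε c (A + S ^ 2 + τ ^ 2) * (4 * S)) from by ring)]
    rw [Finset.sum_add_distrib, Finset.sum_add_distrib, ← Finset.mul_sum, ← Finset.mul_sum,
      Finset.sum_const, Finset.card_univ, Fintype.card_fin, nsmul_eq_mul]
  rw [e1, e2]
  -- final estimate
  have hG : (0:ℝ) < A + S ^ 2 + τ ^ 2 := by positivity
  have hsq : 0 < Real.sqrt (A + S ^ 2 + τ ^ 2) := Real.sqrt_pos.mpr hG
  have hle : S ≤ Real.sqrt (A + S ^ 2 + τ ^ 2) := by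
    calc S ≤ |S| := le_abs_self S
    _ = Real.sqrt (S ^ 2) := (Real.sqrt_sq_eq_abs S).symm
    _ ≤ Real.sqrt (A + S ^ 2 + τ ^ 2) := Real.sqrt_le_sqrt (by nlinarith)
  have hp2 : 0 < P2 ε c (A + S ^ 2 + τ ^ 2) := P2_pos hε hc hG
  have he : 0 < c * Real.exp (-(ε * Real.sqrt (A + S ^ 2 + τ ^ 2))) := by positivity
  have hP1 : P1 ε c (A + S ^ 2 + τ ^ 2)
      = -(ε / (2 * Real.sqrt (A + S ^ 2 + τ ^ 2)))
        * (c * Real.exp (-(ε * Real.sqrt (A + S ^ 2 + τ ^ 2)))) := by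
    unfold P1; ring
  set e := c * Real.exp (-(ε * Real.sqrt (A + S ^ 2 + τ ^ 2))) with hedef
  set q := Real.sqrt (A + S ^ 2 + τ ^ 2) with hqdef
  have key : -(2 * ε * ((2 * (n : ℝ) + 2) + 2)) * e
      ≤ (8 * (n : ℝ) + 16) * S * P1 ε c (A + S ^ 2 + τ ^ 2) := by
    rw [hP1]
    have h1 : (8 * (n : ℝ) + 16) * S * (-(ε / (2 * q)) * e)
        = -((4 * (n : ℝ) + 8) * ε * e * (S / q)) := by
      field_simp
      ring
    rw [h1]
    have h2 : (4 * (n : ℝ) + 8) * ε * e * (S / q) ≤ (4 * (n : ℝ) + 8) * ε * e * 1 := by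
      apply mul_le_mul_of_nonneg_left (div_le_one_of_le₀ hle hsq.le)
      positivity
    nlinarith [h2]
  have h0 : 0 ≤ 16 * S * (S ^ 2 + τ ^ 2) * P2 ε c (A + S ^ 2 + τ ^ 2) := by
    have : (0:ℝ) ≤ S ^ 2 + τ ^ 2 := by positivity
    positivity
  have hgoal : P2 ε c (A + S ^ 2 + τ ^ 2) * (16 * S ^ 2) * (∑ i, x i ^ 2)
        + P1 ε c (A + S ^ 2 + τ ^ 2) * 8 * (∑ i, x i ^ 2)
        + (n : ℝ) * (P1 ε c (A + S ^ 2 + τ ^ 2) * (4 * S))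
        + (P2 ε c (A + S ^ 2 + τ ^ 2) * (16 * S ^ 2) * (∑ i, y i ^ 2)
          + P1 ε c (A + S ^ 2 + τ ^ 2) * 8 * (∑ i, y i ^ 2)
          + (n : ℝ) * (P1 ε c (A + S ^ 2 + τ ^ 2) * (4 * S)))
        + 4 * S * (P2 ε c (A + S ^ 2 + τ ^ 2) * (2 * τ) ^ 2 + P1 ε c (A + S ^ 2 + τ ^ 2) * 2)
      = 16 * S * (S ^ 2 + τ ^ 2) * P2 ε c (A + S ^ 2 + τ ^ 2)
        + (8 * (n : ℝ) + 16) * S * P1 ε c (A + S ^ 2 + τ ^ 2) := by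
    rw [hSdef]
    ring
  linarith [key, h0, hgoal]
end

section
/- Let $0 \le \gamma < 1$, $a \ge 0$, and let $f : [0,T] \to [0,\infty)$ be continuous with $f(0) > 0$, $f$ of class $C^1$, satisfying $f'(t) + f(t) \ge \int_0^t (t-s)^{-\gamma} f(s)^p\,ds$ on $[0,T]$ where $p > 1$. If $\gamma = 0$, then $T < \infty$; i.e., no such $f$ can exist on $[0,\infty)$. -/
open MeasureTheory intervalIntegral Set Filter

set_option maxHeartbeats 4000000 in
theorem gamma_zero_blowup (p : ℝ) (hp : 1 < p) :
    ¬ ∃ f : ℝ → ℝ,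
      ContDiffOn ℝ 1 f (Set.Ici 0) ∧
      (∀ t ∈ Set.Ici (0 : ℝ), 0 ≤ f t) ∧
      0 < f 0 ∧
      (∀ t ∈ Set.Ici (0 : ℝ),
        deriv f t + f t ≥ ∫ s in (0 : ℝ)..t, f s ^ p) := by
  rintro ⟨f, hreg, hnn', hf0, hineq'⟩
  have hnn : ∀ t : ℝ, 0 ≤ t → 0 ≤ f t := fun t ht => hnn' t ht
  obtain ⟨F, hFt⟩ : ∃ F : ℝ → ℝ, ∀ t, F t = ∫ s in (0:ℝ)..t, f s ^ p :=
    ⟨_, fun _ => rfl⟩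
  have hFfun : F = fun u => ∫ s in (0:ℝ)..u, f s ^ p := funext hFt
  have hineq : ∀ t : ℝ, 0 ≤ t → F t ≤ deriv f t + f t := by
    intro t ht
    rw [hFt t]
    exact hineq' t ht
  have hp0 : (0:ℝ) < p := by linarith
  -- basic continuity facts
  have hc : ContinuousOn f (Ici 0) := hreg.continuousOn
  have hcp : ContinuousOn (fun s => f s ^ p) (Ici 0) := fun s hs =>
    (Real.continuousAt_rpow_const (f s) p (Or.inr hp0.le)).comp_continuousWithinAt (hc s hs)
  have huIcc : ∀ {a b : ℝ}, 0 ≤ a → 0 ≤ b → uIcc a b ⊆ Ici 0 := by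
    intro a b ha hb x hx
    rcases Set.mem_uIcc.mp hx with ⟨h1, _⟩ | ⟨h1, _⟩
    · exact le_trans ha h1
    · exact le_trans hb h1
  have hint : ∀ {a b : ℝ}, 0 ≤ a → 0 ≤ b →
      IntervalIntegrable (fun s => f s ^ p) volume a b := by
    intro a b ha hb
    exact (hcp.mono (huIcc ha hb)).intervalIntegrable
  -- FTC: derivative of F
  have hFd : ∀ t : ℝ, 0 < t → HasDerivAt F (f t ^ p) t := by
    intro t ht
    rw [hFfun]
    exact integral_hasDerivAt_right (hint le_rfl ht.le)
      (ContinuousOn.stronglyMeasurableAtFilter isOpen_Ioi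
        (hcp.mono Ioi_subset_Ici_self) t ht)
      ((hcp.mono Ioi_subset_Ici_self).continuousAt (Ioi_mem_nhds ht))
  have hFc : ContinuousOn F (Ioi 0) := fun t ht =>
    ((hFd t ht).continuousAt).continuousWithinAt
  have hFnn : ∀ t : ℝ, 0 ≤ t → 0 ≤ F t := by
    intro t ht
    rw [hFt t]
    exact intervalIntegral.integral_nonneg ht
      (fun s hs => Real.rpow_nonneg (hnn s hs.1) p)
  have hFmono : ∀ a b : ℝ, 0 ≤ a → a ≤ b → F a ≤ F b := by
    intro a b ha hab
    have h1 : F a + ∫ s in a..b, f s ^ p = F b := by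
      rw [hFt a, hFt b]
      exact integral_add_adjacent_intervals (hint le_rfl ha) (hint ha (ha.trans hab))
    have h2 : 0 ≤ ∫ s in a..b, f s ^ p :=
      intervalIntegral.integral_nonneg hab
        (fun s hs => Real.rpow_nonneg (hnn s (ha.trans hs.1)) p)
    linarith
  -- differentiability of f on the interior
  have hfd : ∀ t : ℝ, 0 < t → HasDerivAt f (deriv f t) t := by
    intro t ht
    have : DifferentiableAt ℝ f t :=
      ((hreg.differentiableOn one_ne_zero) t ht.le).differentiableAt (Ici_mem_nhds ht)
    exact this.hasDerivAt
  have hdc : ContinuousOn (deriv f) (Ioi 0) :=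
    (hreg.mono Ioi_subset_Ici_self).continuousOn_deriv_of_isOpen isOpen_Ioi le_rfl
  have hintEF : ∀ a b : ℝ, 0 < a → a ≤ b →
      IntervalIntegrable (fun r => Real.exp r * F r) volume a b := by
    intro a b ha hab
    have hsub : Icc a b ⊆ Ioi 0 := fun x hx => lt_of_lt_of_le ha hx.1
    have hco : ContinuousOn (fun r => Real.exp r * F r) (Icc a b) :=
      (Real.continuous_exp.continuousOn).mul (hFc.mono hsub)
    apply ContinuousOn.intervalIntegrable
    rwa [uIcc_of_le hab]
  -- the master inequality (★)
  have hstar : ∀ a b : ℝ, 0 < a → a ≤ b →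
      Real.exp a * f a + (∫ s in a..b, Real.exp s * F s) ≤ Real.exp b * f b := by
    intro a b ha hab
    have hsub : Icc a b ⊆ Ioi 0 := fun x hx => lt_of_lt_of_le ha hx.1
    have hg : ∀ x ∈ uIcc a b, HasDerivAt (fun t => Real.exp t * f t)
        (Real.exp x * (deriv f x + f x)) x := by
      intro x hx
      rw [uIcc_of_le hab] at hx
      have hx0 : 0 < x := hsub hx
      have h := (Real.hasDerivAt_exp x).mul (hfd x hx0)
      exact h.congr_deriv (by ring)
    have hcont1 : ContinuousOn (fun s => Real.exp s * (deriv f s + f s)) (Icc a b) :=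
      (Real.continuous_exp.continuousOn).mul
        ((hdc.mono hsub).add (hc.mono (hsub.trans Ioi_subset_Ici_self)))
    have hint1 : IntervalIntegrable (fun s => Real.exp s * (deriv f s + f s)) volume a b := by
      apply ContinuousOn.intervalIntegrable
      rwa [uIcc_of_le hab]
    have heq := integral_eq_sub_of_hasDerivAt hg hint1
    have hmono : (∫ s in a..b, Real.exp s * F s) ≤
        ∫ s in a..b, Real.exp s * (deriv f s + f s) := by
      apply intervalIntegral.integral_mono_on hab (hintEF a b ha hab) hint1
      intro x hx
      have hx0 : (0:ℝ) < x := hsub hx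
      exact mul_le_mul_of_nonneg_left (hineq x hx0.le) (Real.exp_pos x).le
    linarith
  -- positivity of f
  have hfpos : ∀ t : ℝ, 0 ≤ t → 0 < f t := by
    intro t ht
    rcases eq_or_lt_of_le ht with h | h
    · rwa [← h]
    · have key : f 0 ≤ Real.exp t * f t := by
        have hev : ∀ᶠ a in nhdsWithin (0:ℝ) (Ioi 0),
            Real.exp a * f a ≤ Real.exp t * f t := by
          filter_upwards [Ioo_mem_nhdsGT h] with a ha
          have h1 := hstar a t ha.1 ha.2.le
          have h2 : 0 ≤ ∫ s in a..t, Real.exp s * F s :=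
            intervalIntegral.integral_nonneg ha.2.le
              (fun s hs => mul_nonneg (Real.exp_pos s).le (hFnn s (le_trans ha.1.le hs.1)))
          linarith
        have hts : Tendsto (fun a => Real.exp a * f a) (nhdsWithin (0:ℝ) (Ioi 0))
            (nhds (Real.exp 0 * f 0)) := by
          have hcw : ContinuousWithinAt (fun a => Real.exp a * f a) (Ici 0) 0 :=
            (Real.continuous_exp.continuousWithinAt).mul (hc 0 self_mem_Ici)
          exact hcw.tendsto.mono_left (nhdsWithin_mono 0 Ioi_subset_Ici_self)
        have := le_of_tendsto hts hev
        simpa using this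
      nlinarith [Real.exp_pos t, hf0]
  -- θ
  obtain ⟨θ, hθ⟩ : ∃ θ : ℝ, θ = 1 - Real.exp (-1) := ⟨_, rfl⟩
  have he1 : Real.exp (-1) < 1 := by
    rw [← Real.exp_zero]
    exact Real.exp_lt_exp.mpr (by norm_num)
  have hθpos : 0 < θ := by rw [hθ]; linarith
  have hθle : θ ≤ 1 := by rw [hθ]; nlinarith [Real.exp_pos (-1)]
  -- lemma L1
  have hL1 : ∀ s t : ℝ, 1 ≤ s → s + 1 ≤ t → θ * F s ≤ f t := by
    intro s t hs hst
    have hs0 : (0:ℝ) < s := by linarith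
    have hst' : s ≤ t := by linarith
    have h1 := hstar s t hs0 hst'
    have hFs : 0 ≤ F s := hFnn s hs0.le
    have h2 : F s * (Real.exp t - Real.exp s) ≤ ∫ r in s..t, Real.exp r * F r := by
      have heq : ∫ r in s..t, F s * Real.exp r = F s * (Real.exp t - Real.exp s) := by
        rw [intervalIntegral.integral_const_mul, integral_exp]
      rw [← heq]
      apply intervalIntegral.integral_mono_on hst'
        ((continuous_const.mul Real.continuous_exp).intervalIntegrable s t)
        (hintEF s t hs0 hst')
      intro x hx
      have hFsx : F s ≤ F x := hFmono s x hs0.le hx.1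
      calc F s * Real.exp x ≤ F x * Real.exp x :=
            mul_le_mul_of_nonneg_right hFsx (Real.exp_pos x).le
        _ = Real.exp x * F x := mul_comm _ _
    have h3 : 0 ≤ Real.exp s * f s := mul_nonneg (Real.exp_pos s).le (hnn s hs0.le)
    have h5 : Real.exp s ≤ Real.exp t * Real.exp (-1) := by
      rw [← Real.exp_add]
      exact Real.exp_le_exp.mpr (by linarith)
    have h5' : F s * Real.exp s ≤ F s * (Real.exp t * Real.exp (-1)) :=
      mul_le_mul_of_nonneg_left h5 hFs
    have h7 : Real.exp t * ((1 - Real.exp (-1)) * F s) ≤ Real.exp t * f t := by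
      nlinarith [h1, h2, h3, h5']
    rw [hθ]
    exact le_of_mul_le_mul_left h7 (Real.exp_pos t)
  -- lemma L2
  have hL2 : ∀ a b c : ℝ, 0 ≤ a → a ≤ b → 0 ≤ c → (∀ s ∈ Icc a b, c ≤ f s) →
      F a + c ^ p * (b - a) ≤ F b := by
    intro a b c ha hab hc0 hcf
    have h1 : F a + ∫ s in a..b, f s ^ p = F b := by
      rw [hFt a, hFt b]
      exact integral_add_adjacent_intervals (hint le_rfl ha) (hint ha (ha.trans hab))
    have h2 : c ^ p * (b - a) ≤ ∫ s in a..b, f s ^ p := by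
      have heq : ∫ _s in a..b, (c:ℝ) ^ p = c ^ p * (b - a) := by
        rw [intervalIntegral.integral_const, smul_eq_mul]; ring
      rw [← heq]
      apply intervalIntegral.integral_mono_on hab intervalIntegrable_const
          (hint ha (ha.trans hab))
      intro x hx
      exact Real.rpow_le_rpow hc0 (hcf x hx) hp0.le
    linarith
  -- eventual largeness
  have hbig : ∀ K : ℝ, 0 < K → ∃ T : ℝ, 1 ≤ T ∧ ∀ t, T ≤ t → K ≤ f t ∧ K ≤ F t := by
    intro K hK
    have hc0 : 0 < F 1 := by
      rw [hFt]
      apply intervalIntegral.intervalIntegral_pos_of_pos_on (hint le_rfl zero_le_one)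
      · intro x hx
        exact Real.rpow_pos_of_pos (hfpos x hx.1.le) p
      · exact one_pos
    have hstep1 : ∀ t, 2 ≤ t → θ * F 1 ≤ f t := fun t ht =>
      hL1 1 t le_rfl (by linarith)
    obtain ⟨c1, hc1⟩ : ∃ c1 : ℝ, c1 = θ * F 1 := ⟨_, rfl⟩
    have hstep1' : ∀ t, 2 ≤ t → c1 ≤ f t := by
      intro t ht; rw [hc1]; exact hstep1 t ht
    have hc1pos : 0 < c1 := by rw [hc1]; exact mul_pos hθpos hc0
    have hcp1 : 0 < c1 ^ p := Real.rpow_pos_of_pos hc1pos p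
    obtain ⟨L, hL⟩ : ∃ L : ℝ, L = K / θ := ⟨_, rfl⟩
    have hLpos : 0 < L := by rw [hL]; exact div_pos hK hθpos
    have hKL : K ≤ L := by
      rw [hL, le_div_iff₀ hθpos]
      nlinarith
    have hquot : 0 < L / c1 ^ p := div_pos hLpos hcp1
    refine ⟨3 + L / c1 ^ p, by linarith, ?_⟩
    intro t htT
    have hs2 : 2 ≤ t - 1 := by linarith
    have hF2 : F 2 + c1 ^ p * ((t - 1) - 2) ≤ F (t - 1) :=
      hL2 2 (t - 1) c1 (by norm_num) (by linarith) hc1pos.le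
        (fun s hs => hstep1' s hs.1)
    have hFt1 : L ≤ F (t - 1) := by
      have h20 : 0 ≤ F 2 := hFnn 2 (by norm_num)
      have hmul : c1 ^ p * (L / c1 ^ p) ≤ c1 ^ p * ((t - 1) - 2) :=
        mul_le_mul_of_nonneg_left (by linarith) hcp1.le
      rw [mul_div_cancel₀ L hcp1.ne'] at hmul
      linarith
    have hft : K ≤ f t := by
      have h1 := hL1 (t - 1) t (by linarith) (by linarith)
      have h2 : θ * L ≤ θ * F (t - 1) := mul_le_mul_of_nonneg_left hFt1 hθpos.le
      have h3 : θ * L = K := by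
        rw [hL]
        field_simp
      linarith
    refine ⟨hft, ?_⟩
    have hFmt : F (t - 1) ≤ F t := hFmono (t - 1) t (by linarith) (by linarith)
    linarith
  -- the blow-up constants
  obtain ⟨σ, hσ⟩ : ∃ σ : ℝ, σ = 2 / (p + 1) := ⟨_, rfl⟩
  obtain ⟨q, hq⟩ : ∃ q : ℝ, q = (p + 1) / 2 := ⟨_, rfl⟩
  have hp1 : (0:ℝ) < p + 1 := by linarith
  have hσpos : 0 < σ := by rw [hσ]; positivity
  have hσlt : σ < 1 := by rw [hσ, div_lt_one hp1]; linarith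
  have hq1 : 1 < q := by rw [hq]; linarith
  have hσq : σ * q = 1 := by rw [hσ, hq]; field_simp
  obtain ⟨M, hM⟩ : ∃ M : ℝ,
      M = max (max ((2:ℝ) ^ (1/(1-σ))) ((2/σ) ^ (1/(q-1)))) 1 := ⟨_, rfl⟩
  have hM1 : (1:ℝ) ≤ M := by rw [hM]; exact le_max_right _ _
  have hMpos : (0:ℝ) < M := lt_of_lt_of_le one_pos hM1
  have hM2 : (2:ℝ) ≤ M ^ (1 - σ) := by
    have h1 : (2:ℝ) ^ (1/(1-σ)) ≤ M := by
      rw [hM]; exact le_trans (le_max_left _ _) (le_max_left _ _)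
    have h2 : (2:ℝ) = ((2:ℝ) ^ (1/(1-σ))) ^ (1-σ) := by
      rw [← Real.rpow_mul (by norm_num : (0:ℝ) ≤ 2), one_div,
        inv_mul_cancel₀ (by linarith : 1 - σ ≠ 0), Real.rpow_one]
    rw [h2]
    exact Real.rpow_le_rpow (Real.rpow_nonneg (by norm_num) _) h1 (by linarith)
  have hM3 : 2/σ ≤ M ^ (q - 1) := by
    have h1 : ((2/σ):ℝ) ^ (1/(q-1)) ≤ M := by
      rw [hM]; exact le_trans (le_max_right _ _) (le_max_left _ _)
    have h2σ : (0:ℝ) ≤ 2/σ := div_nonneg (by norm_num) hσpos.le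
    have h2 : (2/σ:ℝ) = ((2/σ:ℝ) ^ (1/(q-1))) ^ (q-1) := by
      rw [← Real.rpow_mul h2σ, one_div,
        inv_mul_cancel₀ (by linarith : q - 1 ≠ 0), Real.rpow_one]
    rw [h2]
    exact Real.rpow_le_rpow (Real.rpow_nonneg h2σ _) h1 (by linarith)
  obtain ⟨T, hT1, hTbd⟩ := hbig M hMpos
  have hT0 : (0:ℝ) < T := lt_of_lt_of_le one_pos hT1
  obtain ⟨ε, hε⟩ : ∃ ε : ℝ, ε = σ / (2 * (2:ℝ) ^ q) := ⟨_, rfl⟩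
  have h2q : (0:ℝ) < (2:ℝ) ^ q := Real.rpow_pos_of_pos two_pos q
  have hεpos : 0 < ε := by
    rw [hε]
    exact div_pos hσpos (by positivity)
  obtain ⟨Φ, hΦt⟩ : ∃ Φ : ℝ → ℝ, ∀ t, Φ t = f t + F t ^ σ := ⟨_, fun _ => rfl⟩
  have hΦfun : Φ = fun t => f t + F t ^ σ := funext hΦt
  have hΦpos : ∀ t, T ≤ t → 0 < Φ t := by
    intro t ht
    obtain ⟨hfM, hFM⟩ := hTbd t ht
    have h1 : 0 ≤ F t ^ σ := Real.rpow_nonneg (le_trans hMpos.le hFM) σ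
    rw [hΦt]
    nlinarith
  have hΦd : ∀ t, T ≤ t →
      HasDerivAt Φ (deriv f t + f t ^ p * σ * F t ^ (σ - 1)) t := by
    intro t ht
    have ht0 : 0 < t := lt_of_lt_of_le hT0 ht
    obtain ⟨_, hFM⟩ := hTbd t ht
    have hFne : F t ≠ 0 := ne_of_gt (lt_of_lt_of_le hMpos hFM)
    rw [hΦfun]
    exact (hfd t ht0).add ((hFd t ht0).rpow_const (Or.inl hFne))
  -- the key differential inequality
  have hkey : ∀ t, T ≤ t →
      ε * Φ t ^ q ≤ deriv f t + f t ^ p * σ * F t ^ (σ - 1) := by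
    intro t ht
    have ht0 : 0 < t := lt_of_lt_of_le hT0 ht
    obtain ⟨hfM, hFM⟩ := hTbd t ht
    have hA : 0 < f t := lt_of_lt_of_le hMpos hfM
    have hB : 0 < F t := lt_of_lt_of_le hMpos hFM
    have hd : F t - f t ≤ deriv f t := by
      have := hineq t ht0.le; linarith
    have hterm : 0 ≤ f t ^ p * σ * F t ^ (σ - 1) :=
      mul_nonneg (mul_nonneg (Real.rpow_nonneg hA.le p) hσpos.le)
        (Real.rpow_nonneg hB.le _)
    rcases le_or_gt (f t) (F t ^ σ) with hcase | hcase
    · -- case A : f t ≤ F t ^ σ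
      have h1 : M ^ (1-σ) ≤ F t ^ (1-σ) :=
        Real.rpow_le_rpow hMpos.le hFM (by linarith)
      have h2 : F t ^ σ * F t ^ (1-σ) = F t := by
        rw [← Real.rpow_add hB]; norm_num
      have hBσB : F t ^ σ ≤ F t / 2 := by
        nlinarith [Real.rpow_pos_of_pos hB σ]
      have hΦub : Φ t ^ q ≤ 2 ^ q * F t := by
        have hu1 : Φ t ≤ 2 * F t ^ σ := by rw [hΦt]; linarith
        have hu2 : Φ t ^ q ≤ (2 * F t ^ σ) ^ q :=
          Real.rpow_le_rpow (le_of_lt (hΦpos t ht)) hu1 (by linarith)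
        have hu3 : (2 * F t ^ σ) ^ q = 2 ^ q * F t := by
          rw [Real.mul_rpow (by norm_num) (Real.rpow_nonneg hB.le σ),
            ← Real.rpow_mul hB.le, hσq, Real.rpow_one]
        rw [hu3] at hu2; exact hu2
      have h4 : ε * Φ t ^ q ≤ ε * (2 ^ q * F t) :=
        mul_le_mul_of_nonneg_left hΦub hεpos.le
      have h5 : ε * ((2:ℝ) ^ q * F t) = σ/2 * F t := by
        rw [hε]
        field_simp
      have h6 : σ/2 * F t ≤ F t / 2 := by
        nlinarith [mul_nonneg (by linarith : (0:ℝ) ≤ 1 - σ) hB.le]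
      linarith
    · -- case B : F t ^ σ < f t
      have h1 : F t ≤ f t ^ (1/σ) := by
        have hh := Real.rpow_le_rpow (Real.rpow_nonneg hB.le σ) hcase.le
          (le_of_lt (one_div_pos.mpr hσpos))
        rwa [← Real.rpow_mul hB.le, mul_one_div, div_self hσpos.ne',
          Real.rpow_one] at hh
      have h2 : f t ^ (1/σ * (σ-1)) ≤ F t ^ (σ-1) := by
        have hh := Real.rpow_le_rpow_of_nonpos hB h1 (by linarith : σ - 1 ≤ 0)
        rwa [← Real.rpow_mul hA.le] at hh
      have h3 : f t ^ q = f t ^ p * f t ^ (1/σ * (σ-1)) := by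
        rw [← Real.rpow_add hA]
        congr 1
        rw [hσ, hq]
        field_simp
        ring
      have hfq : f t ^ q ≤ f t ^ p * F t ^ (σ-1) := by
        rw [h3]
        exact mul_le_mul_of_nonneg_left h2 (Real.rpow_nonneg hA.le p)
      have hfq2 : 2/σ * f t ≤ f t ^ q := by
        have hh1 : M ^ (q-1) ≤ f t ^ (q-1) :=
          Real.rpow_le_rpow hMpos.le hfM (by linarith)
        have hh2 : f t ^ (q-1) * f t = f t ^ q := by
          rw [← Real.rpow_add_one hA.ne', show q - 1 + 1 = q by ring]
        nlinarith
      have hΦub : Φ t ^ q ≤ 2 ^ q * f t ^ q := by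
        have hu1 : Φ t ≤ 2 * f t := by
          rw [hΦt]; linarith
        have hu2 : Φ t ^ q ≤ (2 * f t) ^ q :=
          Real.rpow_le_rpow (le_of_lt (hΦpos t ht)) hu1 (by linarith)
        rwa [Real.mul_rpow (by norm_num) hA.le] at hu2
      have h4 : ε * Φ t ^ q ≤ σ/2 * f t ^ q := by
        have hh := mul_le_mul_of_nonneg_left hΦub hεpos.le
        have h5 : ε * ((2:ℝ) ^ q * f t ^ q) = σ/2 * f t ^ q := by
          rw [hε]
          field_simp
        linarith
      have h6 : σ * f t ^ q ≤ f t ^ p * σ * F t ^ (σ-1) := by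
        have hh := mul_le_mul_of_nonneg_left hfq hσpos.le
        nlinarith
      have h7 : f t ≤ σ/2 * f t ^ q := by
        have hh := mul_le_mul_of_nonneg_left hfq2 (by linarith : (0:ℝ) ≤ σ/2)
        have he : σ/2 * (2/σ * f t) = f t := by
          field_simp
        rw [he] at hh
        linarith
      have hF0 : 0 ≤ F t := hB.le
      linarith
  -- the auxiliary decreasing function
  obtain ⟨δ, hδ⟩ : ∃ δ : ℝ, δ = (q - 1) * ε := ⟨_, rfl⟩
  have hδpos : 0 < δ := by rw [hδ]; exact mul_pos (by linarith) hεpos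
  obtain ⟨ψ, hψt⟩ : ∃ ψ : ℝ → ℝ, ∀ t, ψ t = Φ t ^ (1 - q) + δ * t := ⟨_, fun _ => rfl⟩
  have hψfun : ψ = fun t => Φ t ^ (1 - q) + δ * t := funext hψt
  have hψd : ∀ t, T ≤ t → HasDerivAt ψ
      ((deriv f t + f t ^ p * σ * F t ^ (σ - 1)) * (1-q) * Φ t ^ (1-q-1) + δ) t := by
    intro t ht
    have h1 := (HasDerivAt.rpow_const (p := 1 - q) (hΦd t ht)
      (Or.inl (ne_of_gt (hΦpos t ht)))).add
      ((hasDerivAt_id t).const_mul δ)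
    rw [hψfun]
    exact h1.congr_deriv (by ring)
  have hψanti : AntitoneOn ψ (Ici T) := by
    apply antitoneOn_of_deriv_nonpos (convex_Ici T)
    · intro t ht
      exact ((hψd t ht).continuousAt).continuousWithinAt
    · intro t ht
      rw [interior_Ici] at ht
      exact (hψd t (le_of_lt ht)).differentiableAt.differentiableWithinAt
    · intro t ht
      rw [interior_Ici] at ht
      have ht' : T ≤ t := le_of_lt ht
      rw [(hψd t ht').deriv]
      have hkey' := hkey t ht'
      have hΦp := hΦpos t ht'
      have hpow : 0 < Φ t ^ (1 - q - 1) := Real.rpow_pos_of_pos hΦp _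
      have hid : Φ t ^ q * Φ t ^ (1 - q - 1) = 1 := by
        rw [← Real.rpow_add hΦp]
        norm_num
      have h2 : ε * Φ t ^ q * Φ t ^ (1-q-1) ≤
          (deriv f t + f t ^ p * σ * F t ^ (σ-1)) * Φ t ^ (1-q-1) :=
        mul_le_mul_of_nonneg_right hkey' hpow.le
      have h3 : ε * Φ t ^ q * Φ t ^ (1-q-1) = ε := by
        rw [mul_assoc, hid, mul_one]
      have h4 : ε ≤ (deriv f t + f t ^ p * σ * F t ^ (σ-1)) * Φ t ^ (1-q-1) := by
        linarith
      have h5 := mul_le_mul_of_nonneg_left h4 (by linarith : (0:ℝ) ≤ q - 1)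
      rw [hδ]
      nlinarith [h5]
  -- final contradiction
  have hΦT := hΦpos T le_rfl
  have hpowT : 0 < Φ T ^ (1 - q) := Real.rpow_pos_of_pos hΦT _
  obtain ⟨t1, ht1def⟩ : ∃ t1 : ℝ, t1 = T + (Φ T ^ (1 - q) + 1) / δ := ⟨_, rfl⟩
  have hquot : 0 < (Φ T ^ (1 - q) + 1) / δ := div_pos (by linarith) hδpos
  have ht1T : T ≤ t1 := by rw [ht1def]; linarith
  have hmono := hψanti (self_mem_Ici) (mem_Ici.mpr ht1T) ht1T
  rw [hψt, hψt] at hmono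
  have hpos1 : 0 < Φ t1 ^ (1 - q) := Real.rpow_pos_of_pos (hΦpos t1 ht1T) _
  have heq : δ * (t1 - T) = Φ T ^ (1 - q) + 1 := by
    have hdiff : t1 - T = (Φ T ^ (1 - q) + 1) / δ := by rw [ht1def]; ring
    rw [hdiff, mul_div_cancel₀ _ hδpos.ne']
  linarith
end
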